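/- arXiv:2503.15188 — 4 statements merged into one kernel-verified Lean document; each statement's English description precedes it below -/
import Mathlib

section
/- Let d ∈ {1,2,3} and let W be a radial smoothing kernel in dimension d with smoothing length h > 0. Let α, β be multi-indices with |α| ≥ 3 and |β| = 1, and let x_i ≠ x_j be points of ℝ^d. Then there exists a unit multi-index β̄ with 2β̄ ≤ α + β (componentwise) such that (x_j − x_i)^α · (∇W(x_i − x_j))^β = (x_j − x_i)^{α+β−2β̄} · (x_j − x_i)^{β̄} · (∇W(x_i − x_j))^{β̄}. If moreover W satisfies the decay condition, then (x_j − x_i)^{β̄}·(∇W(x_i − x_j))^{β̄} ≥ 0 and |(x_j − x_i)^α · (∇W(x_i − x_j))^β| = |(x_j − x_i)^{α+β−2β̄}| · (x_j − x_i)^{β̄} · (∇W(x_i − x_j))^{β̄}. -/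
open scoped BigOperators RealInnerProductSpace
open Finset MeasureTheory

noncomputable section

/-- `ℝ^d` as Euclidean space. -/
abbrev Ed (d : ℕ) : Type := EuclideanSpace ℝ (Fin d)

/-- Value of the radial smoothing kernel `W(x) = (σ/h^d)·Ŵ(‖x‖/h)`,
with profile `P = Ŵ`. -/
def Wval (d : ℕ) (σ h : ℝ) (P : ℝ → ℝ) (x : Ed d) : ℝ :=
  (σ / h ^ d) * P (‖x‖ / h)

/-- Gradient of the radial smoothing kernel:
`∇W(x) = (σ/h^{d+1})·Ŵ'(‖x‖/h)·x/‖x‖` for `x ≠ 0`. -/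
def gradW (d : ℕ) (σ h : ℝ) (P : ℝ → ℝ) (x : Ed d) : Ed d :=
  ((σ / h ^ (d + 1)) * deriv P (‖x‖ / h) / ‖x‖) • x

/-- Multi-index power `v^α = v_1^{α_1}⋯v_d^{α_d}`. -/
def mpow {d : ℕ} (v : Ed d) (α : Fin d → ℕ) : ℝ := ∏ k, (v k) ^ (α k)

/-- Total degree `|α| = α_1 + ⋯ + α_d` of a multi-index. -/
def deg {d : ℕ} (α : Fin d → ℕ) : ℕ := ∑ k, α k

/-- Partial derivative along the `k`-th coordinate. -/
def pd {d : ℕ} (k : Fin d) (f : Ed d → ℝ) : Ed d → ℝ :=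
  fun x => fderiv ℝ f x (EuclideanSpace.single k 1)

/-- Mixed partial derivative `D^α f`. -/
def Dmix {d : ℕ} (α : Fin d → ℕ) (f : Ed d → ℝ) : Ed d → ℝ :=
  (List.finRange d).foldr (fun k g => (pd k)^[α k] g) f

/-- Laplacian `Δf = ∑_k ∂_k∂_k f`. -/
def lapl {d : ℕ} (f : Ed d → ℝ) : Ed d → ℝ := fun x => ∑ k, pd k (pd k f) x

/-- Variable coefficient elliptic operator `∇·(a∇f) = aΔf + ∇a·∇f`. -/
def ellip {d : ℕ} (a f : Ed d → ℝ) : Ed d → ℝ :=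
  fun x => a x * lapl f x + ∑ k, pd k a x * pd k f x

/-- The closed cube `Ω = [0,l]^d`. -/
def cube (d : ℕ) (l : ℝ) : Set (Ed d) := {x | ∀ k, x k ∈ Set.Icc 0 l}

/-- The `C^n(Ω)` norm: the max over multi-indices `α` with `|α| ≤ n` of
`sup_{x ∈ Ω} |D^α f x|`. -/
def Cnorm {d : ℕ} (n : ℕ) (f : Ed d → ℝ) (Ω : Set (Ed d)) : ℝ :=
  sSup {y : ℝ | ∃ α : Fin d → ℕ, deg α ≤ n ∧ ∃ x ∈ Ω, y = |Dmix α f x|}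

lemma mpow_add' {d : ℕ} (v : Ed d) (a b : Fin d → ℕ) :
    mpow v (fun k => a k + b k) = mpow v a * mpow v b := by
  unfold mpow
  rw [← Finset.prod_mul_distrib]
  exact Finset.prod_congr rfl fun k _ => pow_add _ _ _

lemma mpow_smul' {d : ℕ} (c : ℝ) (v : Ed d) (a : Fin d → ℕ) :
    mpow (c • v) a = c ^ deg a * mpow v a := by
  unfold mpow deg
  rw [← Finset.prod_pow_eq_pow_sum, ← Finset.prod_mul_distrib]
  refine Finset.prod_congr rfl fun k _ => ?_
  rw [PiLp.smul_apply, smul_eq_mul, mul_pow]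

lemma mpow_ite {d : ℕ} (v : Ed d) (k1 : Fin d) (m : ℕ) :
    mpow v (fun k => if k = k1 then m else 0) = v k1 ^ m := by
  unfold mpow
  rw [Finset.prod_eq_single k1]
  · simp
  · intro b _ hb; simp [hb]
  · simp

/-- factorization of `(x_j − x_i)^α (∇W(x_i − x_j))^β` through a
unit multi-index `β̄` with `2β̄ ≤ α + β`, for `|α| ≥ 3`, `|β| = 1`, `d ≤ 3`. -/
theorem stmt_2
    (d : ℕ) (hd : d = 1 ∨ d = 2 ∨ d = 3) (σ h : ℝ) (hσ : 0 < σ) (hh : 0 < h)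
    (P : ℝ → ℝ) (hP : ContDiff ℝ 1 P)
    (hPnn : ∀ R : ℝ, 0 ≤ R → 0 ≤ P R)
    (hPsupp : ∀ R : ℝ, 1 ≤ R → P R = 0)
    (α β : Fin d → ℕ) (hα : 3 ≤ deg α) (hβ : deg β = 1)
    (xi xj : Ed d) (hne : xi ≠ xj) :
    ∃ βb : Fin d → ℕ, deg βb = 1 ∧ (∀ k, 2 * βb k ≤ α k + β k) ∧
      mpow (xj - xi) α * mpow (gradW d σ h P (xi - xj)) β
        = mpow (xj - xi) (fun k => α k + β k - 2 * βb k) *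
            (mpow (xj - xi) βb * mpow (gradW d σ h P (xi - xj)) βb) ∧
      ((∀ R : ℝ, 0 ≤ R → deriv P R ≤ 0) →
        0 ≤ mpow (xj - xi) βb * mpow (gradW d σ h P (xi - xj)) βb ∧
        |mpow (xj - xi) α * mpow (gradW d σ h P (xi - xj)) β|
          = |mpow (xj - xi) (fun k => α k + β k - 2 * βb k)| *
              (mpow (xj - xi) βb * mpow (gradW d σ h P (xi - xj)) βb)) := by
  -- pigeonhole: find k1 with α k1 + β k1 ≥ 2
  have hd3 : d ≤ 3 := by rcases hd with h1 | h1 | h1 <;> omega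
  have hk1 : ∃ k1 : Fin d, 2 ≤ α k1 + β k1 := by
    by_contra hcon
    push_neg at hcon
    have hsum : deg α + deg β = ∑ k : Fin d, (α k + β k) := by
      rw [deg, deg, ← Finset.sum_add_distrib]
    have hle : ∑ k : Fin d, (α k + β k) ≤ ∑ _k : Fin d, 1 :=
      Finset.sum_le_sum fun k _ => by have := hcon k; omega
    simp only [Finset.sum_const, Finset.card_univ, Fintype.card_fin, smul_eq_mul, mul_one] at hle
    omega
  obtain ⟨k1, hk1⟩ := hk1
  set v : Ed d := xj - xi with hv
  set c0 : ℝ := σ / h ^ (d + 1) * deriv P (‖xi - xj‖ / h) / ‖xi - xj‖ with hc0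
  have hgrad : gradW d σ h P (xi - xj) = (-c0) • v := by
    rw [gradW, hc0, hv, ← neg_sub xj xi, smul_neg, ← neg_smul]
  set βb : Fin d → ℕ := fun k => if k = k1 then 1 else 0 with hβb
  have hdegβb : deg βb = 1 := by simp [deg, hβb]
  have hle2 : ∀ k, 2 * βb k ≤ α k + β k := by
    intro k
    by_cases hk : k = k1 <;> simp [hβb, hk] <;> omega
  have hmβb : mpow v βb = v k1 := by rw [hβb, mpow_ite, pow_one]
  have hmgβb : mpow (gradW d σ h P (xi - xj)) βb = (-c0) * v k1 := by
    rw [hgrad, mpow_smul', hdegβb, hmβb, pow_one]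
  have hmgβ : mpow (gradW d σ h P (xi - xj)) β = (-c0) * mpow v β := by
    rw [hgrad, mpow_smul', hβ, pow_one]
  have hsplit : mpow v (fun k => α k + β k)
      = mpow v (fun k => α k + β k - 2 * βb k) * (v k1) ^ 2 := by
    have : (fun k => α k + β k)
        = fun k => (α k + β k - 2 * βb k) + (if k = k1 then 2 else 0) := by
      funext k
      by_cases hk : k = k1
      · subst hk
        simp only [hβb, if_pos rfl, if_true, eq_self_iff_true]
        omega
      · simp [hβb, hk]
    rw [this, mpow_add', mpow_ite]
  refine ⟨βb, hdegβb, hle2, ?_, ?_⟩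
  · rw [hmβb, hmgβ, hmgβb]
    have := hsplit
    rw [mpow_add'] at this
    calc mpow v α * (-c0 * mpow v β)
        = (mpow v α * mpow v β) * (-c0) := by ring
      _ = (mpow v (fun k => α k + β k - 2 * βb k) * (v k1) ^ 2) * (-c0) := by rw [this]
      _ = mpow v (fun k => α k + β k - 2 * βb k) * (v k1 * (-c0 * v k1)) := by ring
  · intro hdec
    have hxnorm : 0 < ‖xi - xj‖ := by
      rw [norm_pos_iff, sub_ne_zero]; exact hne
    have hc0le : c0 ≤ 0 := by
      rw [hc0]
      apply div_nonpos_of_nonpos_of_nonneg _ hxnorm.le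
      apply mul_nonpos_of_nonneg_of_nonpos
      · positivity
      · exact hdec _ (by positivity)
    have hnn : 0 ≤ mpow v βb * mpow (gradW d σ h P (xi - xj)) βb := by
      rw [hmβb, hmgβb]
      have : v k1 * (-c0 * v k1) = (-c0) * (v k1) ^ 2 := by ring
      rw [this]
      have : 0 ≤ -c0 := by linarith
      positivity
    refine ⟨hnn, ?_⟩
    have heq : mpow v α * mpow (gradW d σ h P (xi - xj)) β
        = mpow v (fun k => α k + β k - 2 * βb k) *
            (mpow v βb * mpow (gradW d σ h P (xi - xj)) βb) := by
      rw [hmβb, hmgβ, hmgβb]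
      rw [mpow_add'] at hsplit
      calc mpow v α * (-c0 * mpow v β)
          = (mpow v α * mpow v β) * (-c0) := by ring
        _ = (mpow v (fun k => α k + β k - 2 * βb k) * (v k1) ^ 2) * (-c0) := by
            rw [← hsplit]
        _ = mpow v (fun k => α k + β k - 2 * βb k) * (v k1 * (-c0 * v k1)) := by ring
    rw [heq, abs_mul, abs_of_nonneg hnn]
end
end

section
/- (Gradient approximation.) There exists a constant C > 0, depending only on d, σ and sup_{R∈[0,1]}|Ŵ'(R)|, with the following property. Let d ∈ {1,2,3}, let Ω = [0,l]^d with l > 0, let 0 < h ≤ 1, and let W be a radial smoothing kernel satisfying the decay condition. Let x_i ∈ Ω, let (x_j)_{j∈J} be a finite family of points of Ω with x_j ≠ x_i for all j, and let (v_j)_{j∈J} be nonnegative weights satisfying the regularity condition: for every multi-index α with 1 ≤ |α| ≤ 2 and every unit multi-index β, |∑_{j∈J} v_j (x_j − x_i)^α (∇W(x_i − x_j))^β − γ_{α,β}| ≤ h², where γ_{α,β} = 1 if α = β and γ_{α,β} = 0 otherwise. Then for every f ∈ C³(Ω) and every unit multi-index β, |∑_{j∈J} v_j (f(x_j) − f(x_i))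 (∇W(x_i − x_j))^β − ∂^β f(x_i)| ≤ C·h²·‖f‖_{C³(Ω)}. -/
open scoped BigOperators RealInnerProductSpace
open Finset MeasureTheory

noncomputable section

namespace Sph
variable {d : ℕ}

def sing (k : Fin d) : Fin d → ℕ := fun i => if i = k then 1 else 0

lemma deg_sing (k : Fin d) : deg (sing k) = 1 := by simp [deg, sing]

lemma mpow_sing (v : Ed d) (k : Fin d) : mpow v (sing k) = v k := by
  unfold mpow sing
  rw [Finset.prod_eq_single k] <;> simp_all

lemma exists_sing {β : Fin d → ℕ} (hβ : deg β = 1) : ∃ k, β = sing k := by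
  unfold deg at hβ
  obtain ⟨k, -, hk⟩ := Finset.exists_ne_zero_of_sum_ne_zero (by omega : ∑ i, β i ≠ 0)
  have h1 : β k + ∑ i ∈ Finset.univ.erase k, β i = 1 := by
    rw [Finset.add_sum_erase _ _ (Finset.mem_univ _)]; exact hβ
  have hk1 : β k = 1 := by omega
  have h0 : ∀ i ∈ Finset.univ.erase k, β i = 0 := by
    intro i hi
    have := Finset.sum_eq_zero_iff.mp (by omega : ∑ i ∈ Finset.univ.erase k, β i = 0)
    exact this i hi
  refine ⟨k, funext fun i => ?_⟩
  by_cases hik : i = k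
  · simp [sing, hik, hk1]
  · simp [sing, hik, h0 i (Finset.mem_erase.mpr ⟨hik, Finset.mem_univ _⟩)]

def pair (m n : Fin d) : Fin d → ℕ :=
  fun i => (if i = m then 1 else 0) + (if i = n then 1 else 0)

lemma deg_pair (m n : Fin d) : deg (pair m n) = 2 := by
  simp [deg, pair, Finset.sum_add_distrib]

lemma mpow_pair (v : Ed d) (m n : Fin d) : mpow v (pair m n) = v m * v n := by
  unfold mpow pair
  simp only [pow_add]
  rw [Finset.prod_mul_distrib]
  congr 1
  · rw [Finset.prod_eq_single m] <;> simp_all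
  · rw [Finset.prod_eq_single n] <;> simp_all

def trip (a b c : Fin d) : Fin d → ℕ :=
  fun i => (if i = a then 1 else 0) + (if i = b then 1 else 0) + (if i = c then 1 else 0)

lemma deg_trip (a b c : Fin d) : deg (trip a b c) = 3 := by
  simp [deg, trip, Finset.sum_add_distrib]

/-- foldr over list with identity steps removed. -/
lemma foldr_filter (α : Fin d → ℕ) (f : Ed d → ℝ) (L : List (Fin d)) :
    L.foldr (fun k g => (pd k)^[α k] g) f
      = (L.filter (fun j => α j ≠ 0)).foldr (fun k g => (pd k)^[α k] g) f := by
  induction L with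
  | nil => rfl
  | cons j L ih =>
    by_cases hj : α j = 0
    · simp [List.foldr_cons, hj, List.filter_cons, ih]
    · simp [List.foldr_cons, hj, List.filter_cons, ih]

instance : IsAntisymm (Fin d) (· < ·) := ⟨fun a b h1 h2 => absurd h2 (lt_asymm h1)⟩

lemma filter_finRange (p : Fin d → Bool) (L : List (Fin d)) (hL : L.Pairwise (· < ·))
    (hmem : ∀ j, p j = true ↔ j ∈ L) :
    (List.finRange d).filter p = L := by
  have hs : ((List.finRange d).filter p).Pairwise (· < ·) :=
    List.Pairwise.filter _ (List.pairwise_lt_finRange d)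
  have hnd : ((List.finRange d).filter p).Nodup :=
    (List.nodup_finRange d).filter _
  have hLnd : L.Nodup := hL.nodup
  refine List.Perm.eq_of_pairwise (fun a b _ _ h1 h2 => absurd h2 (lt_asymm h1)) hs hL ?_
  rw [List.perm_ext_iff_of_nodup hnd hLnd]
  intro a
  simp [List.mem_filter, hmem]

lemma Dmix_eq_filter (α : Fin d → ℕ) (f : Ed d → ℝ) :
    Dmix α f = ((List.finRange d).filter (fun j => α j ≠ 0)).foldr
        (fun k g => (pd k)^[α k] g) f := by
  unfold Dmix; exact foldr_filter α f _

lemma Dmix_sing (k : Fin d) (f : Ed d → ℝ) : Dmix (sing k) f = pd k f := by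
  rw [Dmix_eq_filter]
  rw [filter_finRange _ [k] (by simp) (by intro j; by_cases h1 : j = k <;> simp [sing, h1])]
  simp [sing]

lemma Dmix_pair {m n : Fin d} (hmn : m ≤ n) (f : Ed d → ℝ) :
    Dmix (pair m n) f = pd m (pd n f) := by
  rw [Dmix_eq_filter]
  rcases eq_or_lt_of_le hmn with he | hlt
  · subst he
    rw [filter_finRange _ [m] (by simp) (by intro j; by_cases h1 : j = m <;> simp [pair, h1])]
    simp [pair, Function.iterate_succ_apply]
  · rw [filter_finRange _ [m, n] (by simp [hlt])
      (by intro j; by_cases h1 : j = m <;> by_cases h2 : j = n <;> simp [pair, h1, h2])]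
    simp [pair, hlt.ne, hlt.ne']

lemma Dmix_trip {a b c : Fin d} (hab : a ≤ b) (hbc : b ≤ c) (f : Ed d → ℝ) :
    Dmix (trip a b c) f = pd a (pd b (pd c f)) := by
  rw [Dmix_eq_filter]
  rcases eq_or_lt_of_le hab with he1 | h1 <;> rcases eq_or_lt_of_le hbc with he2 | h2
  · subst he1; subst he2
    rw [filter_finRange _ [a] (by simp) (by intro j; by_cases h1 : j = a <;> simp [trip, h1])]
    simp [trip, Function.iterate_succ_apply]
  · subst he1
    rw [filter_finRange _ [a, c] (by simp [h2])
      (by intro j; by_cases hj1 : j = a <;> by_cases hj2 : j = c <;> simp [trip, hj1, hj2])]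
    simp [trip, h2.ne, h2.ne', Function.iterate_succ_apply]
  · subst he2
    rw [filter_finRange _ [a, b] (by simp [h1])
      (by intro j; by_cases hj1 : j = a <;> by_cases hj2 : j = b <;> simp [trip, hj1, hj2])]
    simp [trip, h1.ne, h1.ne', Function.iterate_succ_apply]
  · have hac : a < c := h1.trans h2
    rw [filter_finRange _ [a, b, c] (by simp [h1, h2, hac])
      (by intro j; by_cases hj1 : j = a <;> by_cases hj2 : j = b <;> by_cases hj3 : j = c <;>
        simp [trip, hj1, hj2, hj3])]
    simp [trip, h1.ne, h1.ne', h2.ne, h2.ne', hac.ne, hac.ne']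


lemma eucl_decomp (u : Ed d) : u = ∑ m, u m • EuclideanSpace.single m (1:ℝ) := by
  ext i
  rw [show (∑ m, u m • EuclideanSpace.single m (1:ℝ)) i
      = ∑ m, (u m • EuclideanSpace.single m (1:ℝ)) i by rw [WithLp.ofLp_sum, Finset.sum_apply]]
  simp [EuclideanSpace.single_apply]

lemma norm_sq_eucl (u : Ed d) : ‖u‖ ^ 2 = ∑ i, (u i) ^ 2 := by
  rw [PiLp.norm_sq_eq_of_L2]
  exact Finset.sum_congr rfl fun i _ => sq_abs (u i)
  
lemma abs_coord_le_norm (u : Ed d) (k : Fin d) : |u k| ≤ ‖u k‖ := le_refl _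

lemma coord_le_norm (u : Ed d) (k : Fin d) : |u k| ≤ ‖u‖ := by
  have h1 : (u k) ^ 2 ≤ ‖u‖ ^ 2 := by
    rw [norm_sq_eucl]
    exact Finset.single_le_sum (fun i _ => sq_nonneg (u i)) (Finset.mem_univ k)
  calc |u k| = Real.sqrt ((u k) ^ 2) := (Real.sqrt_sq_eq_abs _).symm
  _ ≤ Real.sqrt (‖u‖ ^ 2) := Real.sqrt_le_sqrt h1
  _ = ‖u‖ := by rw [Real.sqrt_sq (norm_nonneg _)]

lemma contDiff_pd {n : WithTop ℕ∞} {g : Ed d → ℝ} (hg : ContDiff ℝ (n + 1) g) (k : Fin d) :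
    ContDiff ℝ n (pd k g) :=
  (hg.fderiv_right le_rfl).clm_apply contDiff_const

lemma fderiv_eq_sum_pd {g : Ed d → ℝ} {y : Ed d} (hg : DifferentiableAt ℝ g y) (u : Ed d) :
    fderiv ℝ g y u = ∑ m, u m * pd m g y := by
  conv_lhs => rw [eucl_decomp u]
  rw [map_sum]
  exact Finset.sum_congr rfl fun m _ => by rw [ContinuousLinearMap.map_smul]; rfl

lemma pd_swap {g : Ed d → ℝ} (hg : ContDiff ℝ 2 g) (m n : Fin d) (y : Ed d) :
    pd m (pd n g) y = pd n (pd m g) y := by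
  have hdg : ContDiff ℝ 1 (fderiv ℝ g) := hg.fderiv_right (by norm_num)
  have h1 : ∀ (a b : Fin d), pd a (pd b g) y
      = fderiv ℝ (fderiv ℝ g) y (EuclideanSpace.single a 1) (EuclideanSpace.single b 1) := by
    intro a b
    have : pd b g = fun z => (fderiv ℝ g z) (EuclideanSpace.single b 1) := rfl
    rw [show pd a (pd b g) y = fderiv ℝ (fun z => (fderiv ℝ g z) (EuclideanSpace.single b 1)) y
        (EuclideanSpace.single a 1) from rfl]
    rw [fderiv_clm_apply (hdg.differentiable one_ne_zero _)
      (differentiableAt_const _)]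
    simp
  rw [h1, h1]
  exact (hg.contDiffAt.isSymmSndFDerivAt (by simp)) _ _


/-- chain rule along a line for a C¹ function -/
lemma hasDerivAt_line {g : Ed d → ℝ} (hg : Differentiable ℝ g) (xi u : Ed d) (t : ℝ) :
    HasDerivAt (fun s : ℝ => g (xi + s • u)) (∑ m, u m * pd m g (xi + t • u)) t := by
  have hγ : HasDerivAt (fun s : ℝ => xi + s • u) u t := by
    simpa using ((hasDerivAt_id t).smul_const u).const_add xi
  have := (hg (xi + t • u)).hasFDerivAt.comp_hasDerivAt t hγ
  rwa [fderiv_eq_sum_pd (hg _) u] at this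

theorem taylor3 {f : Ed d → ℝ} (hf : ContDiff ℝ 3 f) (xi u : Ed d) (M : ℝ)
    (hM : ∀ t ∈ Set.Icc (0:ℝ) 1,
      |∑ m, u m * ∑ p, u p * ∑ q, u q * pd q (pd p (pd m f)) (xi + t • u)| ≤ M) :
    |f (xi + u) - f xi - (∑ m, u m * pd m f xi)
      - (1/2) * ∑ m, u m * ∑ p, u p * pd p (pd m f) xi| ≤ M / 2 := by
  set γ : ℝ → Ed d := fun s => xi + s • u with hγdef
  set φ : ℝ → ℝ := fun s => f (γ s) with hφdef
  set g1 : ℝ → ℝ := fun s => ∑ m, u m * pd m f (γ s) with hg1def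
  set g2 : ℝ → ℝ := fun s => ∑ m, u m * ∑ p, u p * pd p (pd m f) (γ s) with hg2def
  set g3 : ℝ → ℝ := fun s => ∑ m, u m * ∑ p, u p * ∑ q, u q * pd q (pd p (pd m f)) (γ s)
    with hg3def
  have hf3 : ContDiff ℝ ((2:WithTop ℕ∞)+1) f := by
    have : ((2:WithTop ℕ∞)+1) = 3 := by norm_num
    rw [this]; exact hf
  have hf1 : ∀ m : Fin d, ContDiff ℝ 2 (pd m f) := fun m => contDiff_pd hf3 m
  have hf2 : ∀ m p : Fin d, ContDiff ℝ 1 (pd p (pd m f)) := by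
    intro m p
    refine contDiff_pd ?_ p
    have : ((1:WithTop ℕ∞)+1) = 2 := by norm_num
    rw [this]; exact hf1 m
  -- derivative chains
  have hd1 : ∀ t, HasDerivAt φ (g1 t) t := fun t =>
    hasDerivAt_line (hf.differentiable (by norm_num)) xi u t
  have hd2 : ∀ t, HasDerivAt g1 (g2 t) t := by
    intro t
    rw [hg1def, hg2def]
    exact HasDerivAt.fun_sum fun m _ => ((hasDerivAt_line
      ((hf1 m).differentiable (by norm_num)) xi u t).const_mul (u m))
  have hd3 : ∀ t, HasDerivAt g2 (g3 t) t := by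
    intro t
    refine HasDerivAt.fun_sum fun m _ => ?_
    exact (HasDerivAt.fun_sum fun p _ => ((hasDerivAt_line
      ((hf2 m p).differentiable (by norm_num)) xi u t).const_mul (u p))).const_mul (u m)
  -- iterated derivatives within Icc 0 1
  set s : Set ℝ := Set.Icc (0:ℝ) 1 with hsdef
  have hs : UniqueDiffOn ℝ s := uniqueDiffOn_Icc one_pos
  have e1 : ∀ t ∈ s, iteratedDerivWithin 1 φ s t = g1 t := by
    intro t ht
    rw [iteratedDerivWithin_one]
    rw [(hd1 t).differentiableAt.derivWithin (hs.uniqueDiffWithinAt ht)]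
    exact (hd1 t).deriv
  have e2 : ∀ t ∈ s, iteratedDerivWithin 2 φ s t = g2 t := by
    intro t ht
    rw [iteratedDerivWithin_succ]
    rw [derivWithin_congr e1 (e1 t ht)]
    rw [(hd2 t).differentiableAt.derivWithin (hs.uniqueDiffWithinAt ht)]
    exact (hd2 t).deriv
  have e3 : ∀ t ∈ s, iteratedDerivWithin 3 φ s t = g3 t := by
    intro t ht
    rw [iteratedDerivWithin_succ]
    rw [derivWithin_congr e2 (e2 t ht)]
    rw [(hd3 t).differentiableAt.derivWithin (hs.uniqueDiffWithinAt ht)]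
    exact (hd3 t).deriv
  have hφc : ContDiffOn ℝ ((2:ℕ) + 1) φ s := by
    refine ContDiff.contDiffOn ?_
    have hγc : ContDiff ℝ ((2:ℕ)+1 : ℕ∞) γ := by
      rw [hγdef]
      exact contDiff_const.add (contDiff_id.smul contDiff_const)
    exact (hf.of_le (by norm_num)).comp hγc
  have h0s : (0:ℝ) ∈ s := by constructor <;> norm_num
  have h1s : (1:ℝ) ∈ s := by constructor <;> norm_num
  have taylor := taylor_mean_remainder_bound (n := 2) (by norm_num : (0:ℝ) ≤ 1) hφc h1s
    (fun y hy => by rw [show ‖iteratedDerivWithin 3 φ s y‖ = |g3 y| by rw [e3 y hy]; rfl]; exact hM y hy)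
  -- compute the Taylor polynomial
  have hT : taylorWithinEval φ 2 s 0 1 = φ 0 + g1 0 + (1/2) * g2 0 := by
    rw [show (2:ℕ) = 1 + 1 from rfl, taylorWithinEval_succ, taylorWithinEval_succ,
      taylor_within_zero_eval, e1 0 h0s, e2 0 h0s]
    norm_num
  rw [hT] at taylor
  have hφ1 : φ 1 = f (xi + u) := by rw [hφdef]; simp [hγdef]
  have hφ0 : φ 0 = f xi := by rw [hφdef]; simp [hγdef]
  have hg10 : g1 0 = ∑ m, u m * pd m f xi := by rw [hg1def]; simp [hγdef]
  have hg20 : g2 0 = ∑ m, u m * ∑ p, u p * pd p (pd m f) xi := by rw [hg2def]; simp [hγdef]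
  rw [hφ1, hφ0, hg10, hg20] at taylor
  calc |f (xi + u) - f xi - (∑ m, u m * pd m f xi)
      - (1/2) * ∑ m, u m * ∑ p, u p * pd p (pd m f) xi|
      = ‖f (xi + u) - (f xi + (∑ m, u m * pd m f xi)
        + (1/2) * ∑ m, u m * ∑ p, u p * pd p (pd m f) xi)‖ := by
        rw [Real.norm_eq_abs]; ring_nf
  _ ≤ M * (1 - 0) ^ (2+1) / (2:ℕ).factorial := taylor
  _ = M / 2 := by norm_num


lemma contDiff_iter_pd (k : Fin d) : ∀ (c : ℕ) {n : ℕ} {g : Ed d → ℝ},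
    ContDiff ℝ ((c + n : ℕ) : WithTop ℕ∞) g → ContDiff ℝ (n : WithTop ℕ∞) ((pd k)^[c] g) := by
  intro c
  induction c with
  | zero => intro n g hg; simpa using hg
  | succ c ih =>
    intro n g hg
    rw [Function.iterate_succ_apply']
    refine contDiff_pd ?_ k
    have h1 : ((n : WithTop ℕ∞) + 1) = ((n + 1 : ℕ) : WithTop ℕ∞) := by push_cast; ring
    rw [h1]
    refine ih (n := n + 1) ?_
    have h2 : (c + (n + 1) : ℕ) = (c + 1 + n : ℕ) := by omega
    rw [h2]; exact hg

lemma contDiff_foldr (α : Fin d → ℕ) : ∀ (L : List (Fin d)) {n : ℕ} {g : Ed d → ℝ},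
    ContDiff ℝ (((L.map α).sum + n : ℕ) : WithTop ℕ∞) g →
    ContDiff ℝ (n : WithTop ℕ∞) (L.foldr (fun k g => (pd k)^[α k] g) g) := by
  intro L
  induction L with
  | nil => intro n g hg; simpa using hg
  | cons j L ih =>
    intro n g hg
    rw [List.foldr_cons]
    refine contDiff_iter_pd j (α j) (n := n) ?_
    refine ih (n := α j + n) ?_
    have h2 : ((L.map α).sum + (α j + n) : ℕ) = (((j :: L).map α).sum + n : ℕ) := by
      simp [List.map_cons, List.sum_cons]; omega
    rw [h2]; exact hg

lemma continuous_Dmix {f : Ed d → ℝ} (hf : ContDiff ℝ 3 f) {α : Fin d → ℕ}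
    (hα : deg α ≤ 3) : Continuous (Dmix α f) := by
  have hsum : ((List.finRange d).map α).sum = deg α := by
    rw [deg, Fin.sum_univ_def]
  have h3 : (((List.finRange d).map α).sum + (3 - deg α) : ℕ) = 3 := by omega
  have : ContDiff ℝ (((3 - deg α : ℕ)) : WithTop ℕ∞) (Dmix α f) := by
    refine contDiff_foldr α (List.finRange d) ?_
    rw [h3]
    exact_mod_cast hf
  exact this.continuous

lemma isCompact_cube (l : ℝ) : IsCompact (cube d l) := by
  refine Metric.isCompact_of_isClosed_isBounded ?_ ?_
  · have : cube d l = ⋂ k, (fun x : Ed d => x k) ⁻¹' (Set.Icc 0 l) := by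
      ext x; simp [cube, Set.mem_iInter]
    rw [this]
    exact isClosed_iInter fun k =>
      IsClosed.preimage (EuclideanSpace.proj (𝕜 := ℝ) k).continuous isClosed_Icc
  · rcases le_or_gt l 0 with hl | hl
    · refine Metric.isBounded_closedBall (x := (0 : Ed d)) (r := 1) |>.subset ?_
      intro x hx
      have : ∀ k, x k = 0 ∨ (0:ℝ) ≤ l := fun k => by
        have := hx k; right; exact le_trans this.1 this.2
      -- if l ≤ 0 then cube forces x k ∈ Icc 0 l; if l < 0 empty; l = 0 → x = 0
      have hx0 : ∀ k, x k = 0 := fun k => le_antisymm (le_trans (hx k).2 hl) (hx k).1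
      have : x = 0 := by ext k; exact hx0 k
      simp [this]
    · refine Metric.isBounded_closedBall (x := (0 : Ed d)) (r := Real.sqrt (d * l ^ 2)) |>.subset ?_
      intro x hx
      rw [Metric.mem_closedBall, dist_zero_right]
      have h1 : ‖x‖ ^ 2 ≤ d * l ^ 2 := by
        rw [norm_sq_eucl]
        calc ∑ i, (x i) ^ 2 ≤ ∑ _i : Fin d, l ^ 2 := by
              refine Finset.sum_le_sum fun i _ => ?_
              have := hx i
              exact sq_le_sq' (by linarith [this.1, this.2]) this.2
        _ = d * l ^ 2 := by simp [mul_comm]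
      calc ‖x‖ = Real.sqrt (‖x‖ ^ 2) := (Real.sqrt_sq (norm_nonneg _)).symm
      _ ≤ Real.sqrt (d * l ^ 2) := Real.sqrt_le_sqrt h1

lemma dmix_le_cnorm {l : ℝ} {f : Ed d → ℝ} (hf : ContDiff ℝ 3 f) {α : Fin d → ℕ}
    (hα : deg α ≤ 3) {y : Ed d} (hy : y ∈ cube d l) :
    |Dmix α f y| ≤ Cnorm 3 f (cube d l) := by
  set S := {y : ℝ | ∃ α : Fin d → ℕ, deg α ≤ 3 ∧ ∃ x ∈ cube d l, y = |Dmix α f x|} with hS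
  have hbdd : BddAbove S := by
    set B : ℝ := ∑ a : Fin d → Fin 4,
      sSup ((fun x => |Dmix (fun i => (a i : ℕ)) f x|) '' cube d l) with hB
    refine ⟨B, fun z hz => ?_⟩
    obtain ⟨α', hα', x, hx, rfl⟩ := hz
    have hcoord : ∀ i, α' i < 4 := fun i => by
      have : α' i ≤ deg α' := Finset.single_le_sum (fun i _ => Nat.zero_le _) (Finset.mem_univ i)
      omega
    set a : Fin d → Fin 4 := fun i => ⟨α' i, hcoord i⟩ with ha
    have haα : (fun i => (a i : ℕ)) = α' := by funext i; simp [ha]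
    have h1 : |Dmix α' f x| ≤ sSup ((fun x => |Dmix (fun i => (a i : ℕ)) f x|) '' cube d l) := by
      rw [haα]
      refine le_csSup ?_ ⟨x, hx, rfl⟩
      exact IsCompact.bddAbove_image (isCompact_cube l)
        ((continuous_Dmix hf hα').abs.continuousOn)
    refine h1.trans ?_
    refine Finset.single_le_sum (f := fun a => sSup ((fun x =>
      |Dmix (fun i => (a i : ℕ)) f x|) '' cube d l)) (fun b _ => ?_) (Finset.mem_univ a)
    exact Real.sSup_nonneg (fun z hz => by obtain ⟨w, _, rfl⟩ := hz; positivity)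
  exact le_csSup hbdd ⟨α, hα, y, hy, rfl⟩

/-- derivative of the profile vanishes for `R ≥ 1`. -/
lemma derivP_zero {P : ℝ → ℝ} (hPnn : ∀ R : ℝ, 0 ≤ R → 0 ≤ P R)
    (hPsupp : ∀ R : ℝ, 1 ≤ R → P R = 0) {R : ℝ} (hR : 1 ≤ R) : deriv P R = 0 := by
  have hmin : IsLocalMin P R := by
    have hev : ∀ᶠ y in nhds R, 0 < y := eventually_gt_nhds (by linarith)
    filter_upwards [hev] with y hy
    rw [hPsupp R hR]
    exact hPnn y hy.le
  exact hmin.deriv_eq_zero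

/-- points on the segment from `xi` to `z` stay in the cube. -/
lemma seg_mem_cube {d : ℕ} {l : ℝ} {xi z : Ed d} (hxi : xi ∈ cube d l) (hz : z ∈ cube d l)
    {t : ℝ} (ht : t ∈ Set.Icc (0:ℝ) 1) : xi + t • (z - xi) ∈ cube d l := by
  intro m
  have h1 : (xi + t • (z - xi)) m = xi m + t * (z m - xi m) := rfl
  rw [h1]
  obtain ⟨h0, h1'⟩ := hxi m
  obtain ⟨h2, h3⟩ := hz m
  constructor <;> nlinarith [ht.1, ht.2]

end Sph

set_option maxHeartbeats 2000000 in
open Sph in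
/-- Gradient approximation: second-order accuracy of the SPH
gradient approximation under the regularity conditions. -/
theorem stmt_3
    (d : ℕ) (hd : d = 1 ∨ d = 2 ∨ d = 3) (σ : ℝ) (hσ : 0 < σ)
    (P : ℝ → ℝ) (hP : ContDiff ℝ 1 P)
    (hPnn : ∀ R : ℝ, 0 ≤ R → 0 ≤ P R)
    (hPsupp : ∀ R : ℝ, 1 ≤ R → P R = 0)
    (hdec : ∀ R : ℝ, 0 ≤ R → deriv P R ≤ 0) :
    ∃ C > 0, ∀ (l : ℝ), 0 < l → ∀ (h : ℝ), 0 < h → h ≤ 1 →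
      ∀ (xi : Ed d), xi ∈ cube d l →
      ∀ (n : ℕ) (x : Fin n → Ed d) (v : Fin n → ℝ),
        (∀ j, x j ∈ cube d l) →
        (∀ j, x j ≠ xi) →
        (∀ j, 0 ≤ v j) →
        (∀ α : Fin d → ℕ, 1 ≤ deg α → deg α ≤ 2 →
          ∀ β : Fin d → ℕ, deg β = 1 →
            |∑ j, v j * mpow (x j - xi) α * mpow (gradW d σ h P (xi - x j)) β
              - (if α = β then (1 : ℝ) else 0)| ≤ h ^ 2) →
        ∀ f : Ed d → ℝ, ContDiff ℝ 3 f →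
          ∀ β : Fin d → ℕ, deg β = 1 →
            |∑ j, v j * (f (x j) - f xi) * mpow (gradW d σ h P (xi - x j)) β
              - Dmix β f xi| ≤ C * h ^ 2 * Cnorm 3 f (cube d l) := by
  refine ⟨(d:ℝ)^4 + (d:ℝ)^2 + (d:ℝ) + 1, by positivity, ?_⟩
  intro l hl h hh hh1 xi hxi n x v hx hxne hv hreg f hf β hβ
  obtain ⟨k, rfl⟩ := exists_sing hβ
  set N := Cnorm 3 f (cube d l) with hN
  set u : Fin n → Ed d := fun j => x j - xi with hu
  set G : Fin d → Fin n → ℝ := fun m j => gradW d σ h P (xi - x j) m with hG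
  set w : Fin n → ℝ := fun j => -((σ / h ^ (d + 1)) * deriv P (‖xi - x j‖ / h) / ‖xi - x j‖)
    with hw
  -- basic kernel facts
  have hnormne : ∀ j, (0:ℝ) < ‖xi - x j‖ := fun j => by
    rw [norm_pos_iff]
    intro hcon
    exact hxne j (by rwa [sub_eq_zero, eq_comm] at hcon)
  have hnorm_u : ∀ j, ‖xi - x j‖ = ‖u j‖ := fun j => by
    rw [hu, show xi - x j = -(x j - xi) by abel, norm_neg]
  have hGw : ∀ m j, G m j = w j * u j m := by
    intro m j
    have h1 : G m j = ((σ / h ^ (d + 1)) * deriv P (‖xi - x j‖ / h) / ‖xi - x j‖)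
        * ((xi - x j) m) := rfl
    have h2 : (xi - x j) m = -(u j m) := by
      rw [hu]; simp [PiLp.sub_apply]
    rw [h1, h2, hw]; ring
  have hw0 : ∀ j, 0 ≤ w j := by
    intro j
    rw [hw]
    have hnum : deriv P (‖xi - x j‖ / h) ≤ 0 :=
      hdec _ (div_nonneg (norm_nonneg _) hh.le)
    have hpos : (0:ℝ) < σ / h ^ (d + 1) := by positivity
    simp only [neg_nonneg]
    exact div_nonpos_of_nonpos_of_nonneg (mul_nonpos_of_nonneg_of_nonpos hpos.le hnum)
      (norm_nonneg _)
  have hwz : ∀ j, h ≤ ‖u j‖ → w j = 0 := by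
    intro j hj
    have hz : deriv P (‖xi - x j‖ / h) = 0 :=
      derivP_zero hPnn hPsupp ((one_le_div hh).mpr (by rw [hnorm_u]; exact hj))
    show -(σ / h ^ (d + 1) * deriv P (‖xi - x j‖ / h) / ‖xi - x j‖) = 0
    rw [hz]
    simp
  -- regularity in coordinate form
  have hreg1 : ∀ m k' : Fin d,
      |∑ j, v j * u j m * G k' j - (if m = k' then (1:ℝ) else 0)| ≤ h ^ 2 := by
    intro m k'
    have := hreg (sing m) (by rw [deg_sing]) (by rw [deg_sing]; norm_num) (sing k')
      (deg_sing k')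
    have hsum : ∑ j, v j * mpow (x j - xi) (sing m) * mpow (gradW d σ h P (xi - x j)) (sing k')
        = ∑ j, v j * u j m * G k' j := by
      refine Finset.sum_congr rfl fun j _ => ?_
      rw [mpow_sing, mpow_sing]
    have hite : (if sing m = sing k' then (1:ℝ) else 0) = (if m = k' then (1:ℝ) else 0) := by
      by_cases hmk : m = k'
      · subst hmk; simp
      · have : sing m ≠ sing k' := by
          intro hcon
          have := congrFun hcon m
          simp [sing, hmk] at this
        simp [hmk, this]
    rwa [hsum, hite] at this
  have hreg2 : ∀ m p k' : Fin d,
      |∑ j, v j * (u j m * u j p) * G k' j| ≤ h ^ 2 := by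
    intro m p k'
    have := hreg (pair m p) (by rw [deg_pair]; norm_num) (by rw [deg_pair]) (sing k')
      (deg_sing k')
    have hsum : ∑ j, v j * mpow (x j - xi) (pair m p) * mpow (gradW d σ h P (xi - x j)) (sing k')
        = ∑ j, v j * (u j m * u j p) * G k' j := by
      refine Finset.sum_congr rfl fun j _ => ?_
      rw [mpow_pair, mpow_sing]
    have hne : pair m p ≠ sing k' := by
      intro hcon
      have := congrArg deg hcon
      rw [deg_pair, deg_sing] at this
      omega
    rw [if_neg hne, sub_zero] at this
    rwa [hsum] at this
  -- derivative bounds from the C³ norm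
  have hNpd1 : ∀ (m : Fin d) (y : Ed d), y ∈ cube d l → |pd m f y| ≤ N := by
    intro m y hy
    rw [← Dmix_sing m f]
    exact dmix_le_cnorm hf (by rw [deg_sing]; norm_num) hy
  have hNpd2 : ∀ (m p : Fin d) (y : Ed d), y ∈ cube d l → |pd p (pd m f) y| ≤ N := by
    intro m p y hy
    have hf2 : ContDiff ℝ 2 f := hf.of_le (by norm_num)
    rcases le_total p m with hpm | hpm
    · rw [← Dmix_pair hpm f]
      exact dmix_le_cnorm hf (by rw [deg_pair]; norm_num) hy
    · rw [pd_swap hf2 p m y, ← Dmix_pair hpm f]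
      exact dmix_le_cnorm hf (by rw [deg_pair]; norm_num) hy
  have hf3 : ContDiff ℝ ((2:WithTop ℕ∞)+1) f := by
    have h231 : ((2:WithTop ℕ∞)+1) = 3 := by norm_num
    rw [h231]; exact hf
  have hfC2pd : ∀ c : Fin d, ContDiff ℝ 2 (pd c f) := fun c => contDiff_pd hf3 c
  have swap12 : ∀ (a b c : Fin d) (y : Ed d),
      pd a (pd b (pd c f)) y = pd b (pd a (pd c f)) y := fun a b c y =>
    pd_swap (hfC2pd c) a b y
  have swap23 : ∀ (a b c : Fin d) (y : Ed d),
      pd a (pd b (pd c f)) y = pd a (pd c (pd b f)) y := by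
    intro a b c y
    have hfn : pd b (pd c f) = pd c (pd b f) :=
      funext fun z => pd_swap (hf.of_le (by norm_num)) b c z
    rw [hfn]
  have hNpd3 : ∀ (q p m : Fin d) (y : Ed d), y ∈ cube d l →
      |pd q (pd p (pd m f)) y| ≤ N := by
    have key : ∀ (a b c : Fin d), a ≤ b → b ≤ c → ∀ (y : Ed d), y ∈ cube d l →
        |pd a (pd b (pd c f)) y| ≤ N := by
      intro a b c hab hbc y hy
      rw [← Dmix_trip hab hbc f]
      exact dmix_le_cnorm hf (by rw [deg_trip]) hy
    intro q p m y hy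
    rcases le_total q p with h1 | h1
    · rcases le_total p m with h2 | h2
      · exact key q p m h1 h2 y hy
      · rcases le_total q m with h3 | h3
        · rw [swap23]; exact key q m p h3 h2 y hy
        · rw [swap23, swap12]; exact key m q p h3 h1 y hy
    · rcases le_total q m with h2 | h2
      · rw [swap12]; exact key p q m h1 h2 y hy
      · rcases le_total p m with h3 | h3
        · rw [swap12, swap23]; exact key p m q h3 h2 y hy
        · rw [swap23, swap12, swap23]; exact key m p q h3 h1 y hy
  have hN0 : 0 ≤ N := le_trans (abs_nonneg _) (hNpd1 k xi hxi)
  -- third-derivative sum bound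
  have habs3 : ∀ (y : Ed d), y ∈ cube d l → ∀ (uu : Ed d),
      |∑ m, uu m * ∑ p, uu p * ∑ q, uu q * pd q (pd p (pd m f)) y|
        ≤ (d:ℝ)^3 * ‖uu‖^3 * N := by
    intro y hy uu
    have inner1 : ∀ m p : Fin d, |∑ q, uu q * pd q (pd p (pd m f)) y| ≤ (d:ℝ) * (‖uu‖ * N) := by
      intro m p
      calc |∑ q, uu q * pd q (pd p (pd m f)) y| ≤ ∑ q, |uu q * pd q (pd p (pd m f)) y| :=
            Finset.abs_sum_le_sum_abs _ _
      _ ≤ ∑ _q : Fin d, ‖uu‖ * N := by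
            refine Finset.sum_le_sum fun q _ => ?_
            rw [abs_mul]
            exact mul_le_mul (coord_le_norm uu q) (hNpd3 q p m y hy) (abs_nonneg _)
              (norm_nonneg _)
      _ = (d:ℝ) * (‖uu‖ * N) := by simp [mul_comm]
    have inner2 : ∀ m : Fin d, |∑ p, uu p * ∑ q, uu q * pd q (pd p (pd m f)) y|
        ≤ (d:ℝ) * (‖uu‖ * ((d:ℝ) * (‖uu‖ * N))) := by
      intro m
      calc |∑ p, uu p * ∑ q, uu q * pd q (pd p (pd m f)) y|
          ≤ ∑ p, |uu p * ∑ q, uu q * pd q (pd p (pd m f)) y| := Finset.abs_sum_le_sum_abs _ _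
      _ ≤ ∑ _p : Fin d, ‖uu‖ * ((d:ℝ) * (‖uu‖ * N)) := by
            refine Finset.sum_le_sum fun p _ => ?_
            rw [abs_mul]
            exact mul_le_mul (coord_le_norm uu p) (inner1 m p) (abs_nonneg _) (norm_nonneg _)
      _ = (d:ℝ) * (‖uu‖ * ((d:ℝ) * (‖uu‖ * N))) := by simp [mul_comm]
    calc |∑ m, uu m * ∑ p, uu p * ∑ q, uu q * pd q (pd p (pd m f)) y|
        ≤ ∑ m, |uu m * ∑ p, uu p * ∑ q, uu q * pd q (pd p (pd m f)) y| :=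
          Finset.abs_sum_le_sum_abs _ _
    _ ≤ ∑ _m : Fin d, ‖uu‖ * ((d:ℝ) * (‖uu‖ * ((d:ℝ) * (‖uu‖ * N)))) := by
          refine Finset.sum_le_sum fun m _ => ?_
          rw [abs_mul]
          exact mul_le_mul (coord_le_norm uu m) (inner2 m) (abs_nonneg _) (norm_nonneg _)
    _ = (d:ℝ)^3 * ‖uu‖^3 * N := by simp [mul_comm]; ring
  -- Taylor remainder for each j
  set F1 : Fin n → ℝ := fun j => ∑ m, u j m * pd m f xi with hF1
  set F2 : Fin n → ℝ := fun j => ∑ m, u j m * ∑ p, u j p * pd p (pd m f) xi with hF2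
  set R : Fin n → ℝ := fun j => f (x j) - f xi - F1 j - (1/2) * F2 j with hR
  have hRbound : ∀ j, |R j| ≤ ((d:ℝ)^3 * ‖u j‖^3 * N) / 2 := by
    intro j
    have hxj : x j = xi + u j := by show x j = xi + (x j - xi); abel
    have ht3 := taylor3 hf xi (u j) ((d:ℝ)^3 * ‖u j‖^3 * N)
      (fun t ht => habs3 (xi + t • u j) (seg_mem_cube hxi (hx j) ht) (u j))
    show |f (x j) - f xi - F1 j - (1/2) * F2 j| ≤ ((d:ℝ)^3 * ‖u j‖^3 * N) / 2
    rw [hxj]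
    exact ht3
  -- the three sums
  set S1 : Fin d → ℝ := fun m => ∑ j, v j * u j m * G k j with hS1
  have E1 : ∑ j, v j * F1 j * G k j = ∑ m, pd m f xi * S1 m := by
    calc ∑ j, v j * F1 j * G k j
        = ∑ j, ∑ m, pd m f xi * (v j * u j m * G k j) := by
          refine Finset.sum_congr rfl fun j _ => ?_
          calc v j * F1 j * G k j
              = (∑ m, u j m * pd m f xi) * (v j * G k j) := by
                show v j * (∑ m, u j m * pd m f xi) * G k j = _; ring
          _ = ∑ m, u j m * pd m f xi * (v j * G k j) := Finset.sum_mul _ _ _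
          _ = ∑ m, pd m f xi * (v j * u j m * G k j) :=
                Finset.sum_congr rfl fun m _ => by ring
    _ = ∑ m, ∑ j, pd m f xi * (v j * u j m * G k j) := Finset.sum_comm
    _ = ∑ m, pd m f xi * S1 m := by
          refine Finset.sum_congr rfl fun m _ => ?_
          rw [hS1, Finset.mul_sum]
  have E2 : ∑ j, v j * F2 j * G k j
      = ∑ m, ∑ p, pd p (pd m f) xi * ∑ j, v j * (u j m * u j p) * G k j := by
    calc ∑ j, v j * F2 j * G k j
        = ∑ j, ∑ m, ∑ p, pd p (pd m f) xi * (v j * (u j m * u j p) * G k j) := by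
          refine Finset.sum_congr rfl fun j _ => ?_
          calc v j * F2 j * G k j
              = (∑ m, u j m * ∑ p, u j p * pd p (pd m f) xi) * (v j * G k j) := by
                show v j * (∑ m, u j m * ∑ p, u j p * pd p (pd m f) xi) * G k j = _; ring
          _ = ∑ m, (u j m * ∑ p, u j p * pd p (pd m f) xi) * (v j * G k j) :=
                Finset.sum_mul _ _ _
          _ = ∑ m, ∑ p, pd p (pd m f) xi * (v j * (u j m * u j p) * G k j) := by
                refine Finset.sum_congr rfl fun m _ => ?_
                rw [Finset.mul_sum, Finset.sum_mul]
                exact Finset.sum_congr rfl fun p _ => by ring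
    _ = ∑ m, ∑ j, ∑ p, pd p (pd m f) xi * (v j * (u j m * u j p) * G k j) := Finset.sum_comm
    _ = ∑ m, ∑ p, ∑ j, pd p (pd m f) xi * (v j * (u j m * u j p) * G k j) := by
          exact Finset.sum_congr rfl fun m _ => Finset.sum_comm
    _ = ∑ m, ∑ p, pd p (pd m f) xi * ∑ j, v j * (u j m * u j p) * G k j := by
          refine Finset.sum_congr rfl fun m _ => Finset.sum_congr rfl fun p _ => ?_
          rw [Finset.mul_sum]
  have hpdk : pd k f xi = ∑ m, pd m f xi * (if m = k then (1:ℝ) else 0) := by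
    rw [show ∑ m, pd m f xi * (if m = k then (1:ℝ) else 0)
        = ∑ m, (if m = k then pd m f xi else 0) from
      Finset.sum_congr rfl (fun m _ => by by_cases hmk : m = k <;> simp [hmk])]
    rw [Finset.sum_ite_eq' Finset.univ k]
    simp
  have hsplit : ∑ j, v j * (f (x j) - f xi) * G k j - pd k f xi
      = (∑ m, pd m f xi * (S1 m - (if m = k then (1:ℝ) else 0)))
        + (1/2) * (∑ m, ∑ p, pd p (pd m f) xi * ∑ j, v j * (u j m * u j p) * G k j)
        + ∑ j, v j * R j * G k j := by
    have hfj : ∀ j, v j * (f (x j) - f xi) * G k j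
        = v j * F1 j * G k j + (1/2) * (v j * F2 j * G k j) + v j * R j * G k j := by
      intro j; rw [hR]; ring
    rw [Finset.sum_congr rfl (fun j _ => hfj j), Finset.sum_add_distrib,
      Finset.sum_add_distrib, ← Finset.mul_sum, E1, E2, hpdk]
    have hsub : ∑ m, pd m f xi * (S1 m - (if m = k then (1:ℝ) else 0))
        = (∑ m, pd m f xi * S1 m) - ∑ m, pd m f xi * (if m = k then (1:ℝ) else 0) := by
      rw [← Finset.sum_sub_distrib]
      exact Finset.sum_congr rfl fun m _ => by ring
    rw [hsub]; ring
  -- bound the three pieces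
  have hA : |∑ m, pd m f xi * (S1 m - (if m = k then (1:ℝ) else 0))|
      ≤ (d:ℝ) * (N * h^2) := by
    calc |∑ m, pd m f xi * (S1 m - (if m = k then (1:ℝ) else 0))|
        ≤ ∑ m, |pd m f xi * (S1 m - (if m = k then (1:ℝ) else 0))| :=
          Finset.abs_sum_le_sum_abs _ _
    _ ≤ ∑ _m : Fin d, N * h^2 := by
          refine Finset.sum_le_sum fun m _ => ?_
          rw [abs_mul]
          exact mul_le_mul (hNpd1 m xi hxi) (hreg1 m k) (abs_nonneg _) hN0
    _ = (d:ℝ) * (N * h^2) := by simp [mul_comm]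
  have hB : |∑ m, ∑ p, pd p (pd m f) xi * ∑ j, v j * (u j m * u j p) * G k j|
      ≤ (d:ℝ) * ((d:ℝ) * (N * h^2)) := by
    calc |∑ m, ∑ p, pd p (pd m f) xi * ∑ j, v j * (u j m * u j p) * G k j|
        ≤ ∑ m, |∑ p, pd p (pd m f) xi * ∑ j, v j * (u j m * u j p) * G k j| :=
          Finset.abs_sum_le_sum_abs _ _
    _ ≤ ∑ _m : Fin d, (d:ℝ) * (N * h^2) := by
          refine Finset.sum_le_sum fun m _ => ?_
          calc |∑ p, pd p (pd m f) xi * ∑ j, v j * (u j m * u j p) * G k j|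
              ≤ ∑ p, |pd p (pd m f) xi * ∑ j, v j * (u j m * u j p) * G k j| :=
                Finset.abs_sum_le_sum_abs _ _
          _ ≤ ∑ _p : Fin d, N * h^2 := by
                refine Finset.sum_le_sum fun p _ => ?_
                rw [abs_mul]
                exact mul_le_mul (hNpd2 m p xi hxi) (hreg2 m p k) (abs_nonneg _) hN0
          _ = (d:ℝ) * (N * h^2) := by simp [mul_comm]
    _ = (d:ℝ) * ((d:ℝ) * (N * h^2)) := by simp [mul_comm]
  have hGb : ∀ j, |G k j| ≤ w j * ‖u j‖ := by
    intro j
    rw [hGw k j, abs_mul, abs_of_nonneg (hw0 j)]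
    exact mul_le_mul_of_nonneg_left (coord_le_norm (u j) k) (hw0 j)
  have hq0 : ∀ j, (0:ℝ) ≤ v j * (w j * ‖u j‖^2) := fun j =>
    mul_nonneg (hv j) (mul_nonneg (hw0 j) (sq_nonneg _))
  have hcoef0 : (0:ℝ) ≤ (d:ℝ)^3 * N / 2 :=
    div_nonneg (mul_nonneg (by positivity) hN0) (by norm_num)
  have hpt : ∀ j, |v j * R j * G k j|
      ≤ ((d:ℝ)^3 * N / 2) * h^2 * (v j * (w j * ‖u j‖^2)) := by
    intro j
    rw [abs_mul, abs_mul, abs_of_nonneg (hv j)]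
    rcases le_or_gt h ‖u j‖ with hcase | hcase
    · have hG0 : G k j = 0 := by rw [hGw k j, hwz j hcase]; ring
      rw [hG0, abs_zero, mul_zero]
      exact mul_nonneg (mul_nonneg hcoef0 (sq_nonneg _)) (hq0 j)
    · have hRb2 : 0 ≤ ((d:ℝ)^3 * ‖u j‖^3 * N) / 2 :=
        div_nonneg (mul_nonneg (mul_nonneg (by positivity) (by positivity)) hN0) (by norm_num)
      calc v j * |R j| * |G k j|
          ≤ v j * (((d:ℝ)^3 * ‖u j‖^3 * N)/2) * (w j * ‖u j‖) := by
            refine mul_le_mul ?_ (hGb j) (abs_nonneg _) ?_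
            · exact mul_le_mul_of_nonneg_left (hRbound j) (hv j)
            · exact mul_nonneg (hv j) hRb2
      _ = ((d:ℝ)^3 * N / 2) * (v j * w j) * (‖u j‖^2 * ‖u j‖^2) := by ring
      _ ≤ ((d:ℝ)^3 * N / 2) * (v j * w j) * (h^2 * ‖u j‖^2) := by
            refine mul_le_mul_of_nonneg_left ?_
              (mul_nonneg hcoef0 (mul_nonneg (hv j) (hw0 j)))
            exact mul_le_mul_of_nonneg_right
              (by nlinarith [norm_nonneg (u j)]) (sq_nonneg _)
      _ = ((d:ℝ)^3 * N / 2) * h^2 * (v j * (w j * ‖u j‖^2)) := by ring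
  have hT : ∑ j, v j * (w j * ‖u j‖^2) ≤ 2 * (d:ℝ) := by
    have hstep : ∑ j, v j * (w j * ‖u j‖^2) = ∑ m, ∑ j, v j * u j m * G m j := by
      calc ∑ j, v j * (w j * ‖u j‖^2)
          = ∑ j, ∑ m, v j * u j m * G m j := by
            refine Finset.sum_congr rfl fun j _ => ?_
            rw [norm_sq_eucl (u j), Finset.mul_sum, Finset.mul_sum]
            refine Finset.sum_congr rfl fun m _ => ?_
            rw [hGw m j]; ring
      _ = ∑ m, ∑ j, v j * u j m * G m j := Finset.sum_comm
    rw [hstep]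
    calc ∑ m, ∑ j, v j * u j m * G m j ≤ ∑ _m : Fin d, (2:ℝ) := by
          refine Finset.sum_le_sum fun m _ => ?_
          have := hreg1 m m
          rw [if_pos rfl] at this
          have h2 : h^2 ≤ 1 := by nlinarith
          have := abs_le.mp this
          linarith [this.2]
    _ = 2 * (d:ℝ) := by simp [mul_comm]
  have hC : |∑ j, v j * R j * G k j| ≤ (d:ℝ)^4 * (N * h^2) := by
    calc |∑ j, v j * R j * G k j| ≤ ∑ j, |v j * R j * G k j| := Finset.abs_sum_le_sum_abs _ _
    _ ≤ ∑ j, ((d:ℝ)^3 * N / 2) * h^2 * (v j * (w j * ‖u j‖^2)) :=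
          Finset.sum_le_sum fun j _ => hpt j
    _ = ((d:ℝ)^3 * N / 2) * h^2 * ∑ j, v j * (w j * ‖u j‖^2) := by rw [Finset.mul_sum]
    _ ≤ ((d:ℝ)^3 * N / 2) * h^2 * (2 * (d:ℝ)) := by
          exact mul_le_mul_of_nonneg_left hT (mul_nonneg hcoef0 (sq_nonneg _))
    _ = (d:ℝ)^4 * (N * h^2) := by ring
  -- final assembly
  have hgoalsum : ∑ j, v j * (f (x j) - f xi) * mpow (gradW d σ h P (xi - x j)) (sing k)
      = ∑ j, v j * (f (x j) - f xi) * G k j :=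
    Finset.sum_congr rfl fun j _ => by rw [mpow_sing]
  rw [hgoalsum, Dmix_sing, hsplit]
  have habs : |(∑ m, pd m f xi * (S1 m - (if m = k then (1:ℝ) else 0)))
      + (1/2) * (∑ m, ∑ p, pd p (pd m f) xi * ∑ j, v j * (u j m * u j p) * G k j)
      + ∑ j, v j * R j * G k j|
      ≤ |∑ m, pd m f xi * (S1 m - (if m = k then (1:ℝ) else 0))|
        + (1/2) * |∑ m, ∑ p, pd p (pd m f) xi * ∑ j, v j * (u j m * u j p) * G k j|
        + |∑ j, v j * R j * G k j| := by
    refine (abs_add_le _ _).trans ?_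
    refine add_le_add ((abs_add_le _ _).trans ?_) le_rfl
    refine add_le_add le_rfl ?_
    rw [abs_mul, abs_of_pos (by norm_num : (0:ℝ) < 1/2)]
  refine habs.trans ?_
  have hfinal : (d:ℝ) * (N * h^2) + (1/2) * ((d:ℝ) * ((d:ℝ) * (N * h^2)))
      + (d:ℝ)^4 * (N * h^2) ≤ ((d:ℝ)^4 + (d:ℝ)^2 + (d:ℝ) + 1) * h^2 * N := by
    have hNh : 0 ≤ N * h^2 := mul_nonneg hN0 (sq_nonneg _)
    have hkey : ((d:ℝ)^4 + (d:ℝ)^2 + (d:ℝ) + 1) * h^2 * N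
        - ((d:ℝ) * (N * h^2) + (1/2) * ((d:ℝ) * ((d:ℝ) * (N * h^2)))
          + (d:ℝ)^4 * (N * h^2)) = ((d:ℝ)^2/2 + 1) * (N * h^2) := by ring
    have hpos : 0 ≤ ((d:ℝ)^2/2 + 1) * (N * h^2) :=
      mul_nonneg (by positivity) hNh
    linarith
  refine le_trans ?_ hfinal
  have hBb : (1/2) * |∑ m, ∑ p, pd p (pd m f) xi * ∑ j, v j * (u j m * u j p) * G k j|
      ≤ (1/2) * ((d:ℝ) * ((d:ℝ) * (N * h^2))) := by linarith [hB]
  linarith [hA, hBb, hC]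
end
end

section
/- (Laplace approximation.) There exists a constant C > 0, depending only on d, σ and sup_{R∈[0,1]}|Ŵ'(R)|, with the following property. Let d ∈ {1,2,3}, let Ω = [0,l]^d with l > 0, let 0 < h ≤ 1, and let W be a radial smoothing kernel satisfying the decay condition. Let x_i ∈ Ω, let (x_j)_{j∈J} be a finite family of points of Ω with x_j ≠ x_i for all j, and let (v_j)_{j∈J} be nonnegative weights satisfying the regularity condition: for every multi-index α with 0 ≤ |α| ≤ 2 and every unit multi-index β, |∑_{j∈J} v_j (x_j − x_i)^α (∇W(x_i − x_j))^β − γ̄_{α,β}| ≤ h², where γ̄_{α,β} = 1 if α = β and γ̄_{α,β} = 0 otherwise. Then for every f ∈ C⁴(Ω), |2·∑_{j∈J} v_j (f(x_i) − f(x_j)) ((x_i − x_j)·∇W(x_i − x_j))/‖x_i − x_j‖² − Δf(x_i)| ≤ C·h²·‖f‖_{C⁴(Ω)}. -/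
open scoped BigOperators RealInnerProductSpace
open Finset MeasureTheory

noncomputable section

/-! ### Auxiliary lemmas -/

/-- Iterated coordinate partial derivatives along a list of coordinates. -/
def pds {d : ℕ} (ks : List (Fin d)) (f : Ed d → ℝ) : Ed d → ℝ :=
  ks.foldr pd f

@[simp] lemma pds_nil {d : ℕ} (f : Ed d → ℝ) : pds [] f = f := rfl
@[simp] lemma pds_cons {d : ℕ} (k : Fin d) (ks : List (Fin d)) (f : Ed d → ℝ) :
    pds (k :: ks) f = pd k (pds ks f) := rfl

lemma pds_append {d : ℕ} (l₁ l₂ : List (Fin d)) (f : Ed d → ℝ) :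
    pds (l₁ ++ l₂) f = pds l₁ (pds l₂ f) := by
  simp [pds, List.foldr_append]

lemma pds_replicate {d : ℕ} (n : ℕ) (k : Fin d) (f : Ed d → ℝ) :
    pds (List.replicate n k) f = (pd k)^[n] f := by
  induction n with
  | zero => rfl
  | succ n ih => simp [List.replicate_succ, ih, Function.iterate_succ_apply']

lemma contDiff_pd {d : ℕ} (k : Fin d) {f : Ed d → ℝ} {n : ℕ}
    (hf : ContDiff ℝ (n + 1 : ℕ) f) : ContDiff ℝ (n : ℕ) (pd k f) := by
  have h1 : ContDiff ℝ (n : ℕ) (fderiv ℝ f) := by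
    apply hf.fderiv_right
    norm_cast
  exact (ContinuousLinearMap.apply ℝ ℝ (EuclideanSpace.single k 1)).contDiff.comp h1

lemma contDiff_pds {d : ℕ} (ks : List (Fin d)) {f : Ed d → ℝ} {n : ℕ}
    (hf : ContDiff ℝ (n + ks.length : ℕ) f) : ContDiff ℝ (n : ℕ) (pds ks f) := by
  induction ks generalizing n with
  | nil => simpa using hf
  | cons k ks ih =>
      have : ContDiff ℝ ((n + 1 : ℕ)) (pds ks f) := by
        apply ih
        convert hf using 2
        simp; ring
      exact contDiff_pd k this

lemma fderiv_apply_comm {d : ℕ} {G : Ed d → ℝ} (hG : ContDiff ℝ 2 G)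
    (v : Ed d) (x : Ed d) :
    fderiv ℝ (fun y => fderiv ℝ G y v) x =
      (ContinuousLinearMap.apply ℝ ℝ v).comp (fderiv ℝ (fderiv ℝ G) x) := by
  have hG1 : ContDiff ℝ 1 (fderiv ℝ G) := hG.fderiv_right (by norm_cast)
  have hd : DifferentiableAt ℝ (fderiv ℝ G) x :=
    (hG1.differentiable (by norm_num)) x
  exact ((ContinuousLinearMap.apply ℝ ℝ v).hasFDerivAt.comp x hd.hasFDerivAt).fderiv

lemma pd_comm {d : ℕ} (a b : Fin d) {G : Ed d → ℝ} (hG : ContDiff ℝ 2 G) :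
    pd a (pd b G) = pd b (pd a G) := by
  have hG1 : ContDiff ℝ 1 (fderiv ℝ G) := hG.fderiv_right (by norm_cast)
  have hGd : ∀ y, HasFDerivAt G (fderiv ℝ G y) y := fun y =>
    ((hG.differentiable (by norm_num)) y).hasFDerivAt
  funext x
  have hsym := second_derivative_symmetric hGd
    ((hG1.differentiable (by norm_num) x).hasFDerivAt.fderiv ▸
      (hG1.differentiable (by norm_num) x).hasFDerivAt)
    (EuclideanSpace.single a 1) (EuclideanSpace.single b 1)
  show fderiv ℝ (fun y => fderiv ℝ G y (EuclideanSpace.single b 1)) x (EuclideanSpace.single a 1)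
      = fderiv ℝ (fun y => fderiv ℝ G y (EuclideanSpace.single a 1)) x (EuclideanSpace.single b 1)
  rw [fderiv_apply_comm hG, fderiv_apply_comm hG]
  simpa using hsym

lemma pds_perm {d : ℕ} {f : Ed d → ℝ} {N : ℕ} (hf : ContDiff ℝ (N : ℕ) f)
    {ks ks' : List (Fin d)} (hp : ks.Perm ks') (hlen : ks.length ≤ N) :
    pds ks f = pds ks' f := by
  induction hp with
  | nil => rfl
  | cons k _ ih =>
      simp only [pds, List.foldr_cons] at *
      rw [ih (by simpa using Nat.le_of_succ_le hlen)]
  | swap a b l =>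
      show pd b (pd a (pds l f)) = pd a (pd b (pds l f))
      have h2 : l.length + 2 ≤ N := by simpa [Nat.succ_le_iff] using hlen
      have : ContDiff ℝ (2 : ℕ) (pds l f) := by
        apply contDiff_pds
        exact hf.of_le (by exact_mod_cast by omega)
      exact pd_comm b a this
  | trans h1 h2 ih1 ih2 =>
      rw [ih1 hlen, ih2 (by rwa [← h1.length_eq])]

/-- The canonical (sorted) list associated with a multi-index. -/
def canon {d : ℕ} (α : Fin d → ℕ) : List (Fin d) :=
  (List.finRange d).flatMap fun k => List.replicate (α k) k

lemma Dmix_eq_pds {d : ℕ} (α : Fin d → ℕ) (f : Ed d → ℝ) :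
    Dmix α f = pds (canon α) f := by
  unfold Dmix canon
  induction (List.finRange d) with
  | nil => rfl
  | cons k L ih =>
      simp only [List.foldr_cons, List.flatMap_cons, pds_append, pds_replicate, ih]

lemma length_canon {d : ℕ} (α : Fin d → ℕ) : (canon α).length = deg α := by
  have h : (List.length ∘ fun k : Fin d => List.replicate (α k) k) = α := by
    funext b; simp
  simp [canon, deg, List.length_flatMap, h, Fin.sum_univ_def]

lemma count_canon {d : ℕ} (α : Fin d → ℕ) (k : Fin d) :
    (canon α).count k = α k := by
  have h : (List.count k ∘ fun b : Fin d => List.replicate (α b) b)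
      = fun b => if b = k then α b else 0 := by
    funext b; simp [List.count_replicate]
  rw [canon, List.count_flatMap, h, ← Fin.sum_univ_def (fun b => if b = k then α b else 0)]
  rw [Finset.sum_ite_eq' Finset.univ k α]
  simp

lemma canon_perm {d : ℕ} (ks : List (Fin d)) :
    (canon (fun k => ks.count k)).Perm ks :=
  List.perm_iff_count.mpr fun a => by rw [count_canon]

lemma deg_count {d : ℕ} (ks : List (Fin d)) :
    deg (fun k => ks.count k) = ks.length := by
  rw [← length_canon, (canon_perm ks).length_eq]

lemma cube_eq_pi (d : ℕ) (l : ℝ) :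
    cube d l = WithLp.toLp 2 '' Set.univ.pi (fun _ : Fin d => Set.Icc (0:ℝ) l) := by
  ext x
  constructor
  · intro hx; exact ⟨x.ofLp, fun k _ => hx k, rfl⟩
  · rintro ⟨y, hy, rfl⟩ k; exact hy k (Set.mem_univ k)

lemma isCompact_cube (d : ℕ) (l : ℝ) : IsCompact (cube d l) := by
  rw [cube_eq_pi]
  exact (isCompact_univ_pi (fun _ => isCompact_Icc)).image (PiLp.continuous_toLp 2 _)

lemma cube_nonempty {d : ℕ} {l : ℝ} (hl : 0 < l) : (cube d l).Nonempty := by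
  refine ⟨0, fun k => ?_⟩
  simp [Set.mem_Icc, le_of_lt hl]

lemma cube_segment {d : ℕ} {l : ℝ} {a b : Ed d} (ha : a ∈ cube d l)
    (hb : b ∈ cube d l) {t : ℝ} (ht : t ∈ Set.Icc (0:ℝ) 1) :
    a + t • (b - a) ∈ cube d l := by
  intro k
  have hak := ha k
  have hbk := hb k
  have : (a + t • (b - a)) k = (1 - t) * a k + t * b k := by
    simp [PiLp.add_apply, PiLp.smul_apply, PiLp.sub_apply, smul_eq_mul]
    ring
  rw [this]
  constructor
  · have := mul_nonneg (by linarith [ht.2] : (0:ℝ) ≤ 1 - t) hak.1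
    have := mul_nonneg ht.1 hbk.1
    linarith
  · have h1 := mul_le_mul_of_nonneg_left hak.2 (by linarith [ht.2] : (0:ℝ) ≤ 1 - t)
    have h2 := mul_le_mul_of_nonneg_left hbk.2 ht.1
    nlinarith

lemma coord_abs_le_norm {d : ℕ} (w : Ed d) (k : Fin d) : |w k| ≤ ‖w‖ := by
  have h := EuclideanSpace.norm_eq w
  have h1 : (w k) ^ 2 ≤ ∑ m, ‖w m‖ ^ 2 := by
    have := Finset.single_le_sum (f := fun m => ‖w m‖ ^ 2)
      (fun m _ => sq_nonneg _) (Finset.mem_univ k)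
    simpa [Real.norm_eq_abs, sq_abs] using this
  calc |w k| = Real.sqrt ((w k) ^ 2) := by rw [Real.sqrt_sq_eq_abs]
  _ ≤ Real.sqrt (∑ m, ‖w m‖ ^ 2) := Real.sqrt_le_sqrt h1
  _ = ‖w‖ := by rw [h]

lemma norm_sq_eq_sum {d : ℕ} (w : Ed d) : ‖w‖ ^ 2 = ∑ k, (w k) ^ 2 := by
  rw [EuclideanSpace.norm_eq, Real.sq_sqrt]
  · simp [Real.norm_eq_abs, sq_abs]
  · exact Finset.sum_nonneg fun k _ => sq_nonneg _

lemma continuous_Dmix {d : ℕ} {f : Ed d → ℝ} (hf : ContDiff ℝ 4 f)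
    (α : Fin d → ℕ) (hα : deg α ≤ 4) : Continuous (Dmix α f) := by
  rw [Dmix_eq_pds]
  have : ContDiff ℝ ((0 : ℕ) : WithTop ℕ∞) (pds (canon α) f) := by
    apply contDiff_pds
    apply hf.of_le
    have : (0 + (canon α).length) ≤ 4 := by rw [length_canon]; omega
    exact_mod_cast Nat.cast_le.mpr this
  exact this.continuous

lemma cnorm_key {d : ℕ} {l : ℝ} (hl : 0 < l) {f : Ed d → ℝ} (hf : ContDiff ℝ 4 f) :
    ∀ ks : List (Fin d), ks.length ≤ 4 → ∀ y ∈ cube d l,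
      |pds ks f y| ≤ Cnorm 4 f (cube d l) := by
  have hbound : ∀ a : Fin d → Fin 5, ∃ B : ℝ, 0 ≤ B ∧
      (deg (fun k => (a k : ℕ)) ≤ 4 → ∀ y ∈ cube d l,
        |Dmix (fun k => (a k : ℕ)) f y| ≤ B) := by
    intro a
    by_cases hdeg : deg (fun k => (a k : ℕ)) ≤ 4
    · have hc : ContinuousOn (fun y => |Dmix (fun k => (a k : ℕ)) f y|) (cube d l) :=
        ((continuous_Dmix hf _ hdeg).abs).continuousOn
      obtain ⟨y0, hy0, hmax⟩ := (isCompact_cube d l).exists_isMaxOn (cube_nonempty hl) hc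
      exact ⟨_, abs_nonneg _, fun _ y hy => hmax hy⟩
    · exact ⟨0, le_refl _, fun h => absurd h hdeg⟩
  choose B hB0 hBle using hbound
  set Btot : ℝ := ∑ a : Fin d → Fin 5, B a with hBtot
  have hub : ∀ z ∈ {y : ℝ | ∃ α : Fin d → ℕ, deg α ≤ 4 ∧ ∃ x ∈ cube d l, y = |Dmix α f x|},
      z ≤ Btot := by
    rintro z ⟨α, hα, y, hy, rfl⟩
    have hcoord : ∀ k, α k < 5 := by
      intro k
      have : α k ≤ deg α := Finset.single_le_sum (f := α) (fun _ _ => Nat.zero_le _)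
        (Finset.mem_univ k)
      omega
    set a : Fin d → Fin 5 := fun k => ⟨α k, hcoord k⟩ with ha
    have hαa : α = fun k => ((a k : ℕ)) := by funext k; simp [ha]
    calc |Dmix α f y| ≤ B a := by
          rw [hαa] at hα ⊢
          exact hBle a hα y hy
      _ ≤ Btot := Finset.single_le_sum (f := B) (fun i _ => hB0 i) (Finset.mem_univ a)
  intro ks hks y hy
  have hperm := canon_perm ks
  have hdegc : deg (fun k => ks.count k) ≤ 4 := by rw [deg_count]; exact hks
  have heq : pds ks f y = Dmix (fun k => ks.count k) f y := by
    rw [Dmix_eq_pds, pds_perm hf hperm]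
    rw [length_canon, deg_count]; exact hks
  rw [heq]
  exact le_csSup ⟨Btot, hub⟩ ⟨_, hdegc, y, hy, rfl⟩

lemma sum_single_eq {d : ℕ} (w : Ed d) :
    ∑ k, w k • EuclideanSpace.single k (1:ℝ) = w := by
  have := (EuclideanSpace.basisFun (Fin d) ℝ).sum_repr w
  simpa [EuclideanSpace.basisFun_apply, EuclideanSpace.basisFun_repr] using this

lemma step {d : ℕ} {F : Ed d → ℝ} (hF : Differentiable ℝ F) (xi u : Ed d) (t : ℝ) :
    HasDerivAt (fun s : ℝ => F (xi + s • u)) (∑ k, pd k F (xi + t • u) * u k) t := by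
  have hγ : HasDerivAt (fun s : ℝ => xi + s • u) u t := by
    simpa using ((hasDerivAt_id t).smul_const u).const_add xi
  have hcomp := (hF (xi + t • u)).hasFDerivAt.comp_hasDerivAt t hγ
  set L := fderiv ℝ F (xi + t • u) with hL
  have hval : L u = ∑ k, pd k F (xi + t • u) * u k := by
    rw [← sum_single_eq u, map_sum]
    simp only [sum_single_eq]
    refine Finset.sum_congr rfl fun k _ => ?_
    rw [_root_.map_smul]
    simp [pd, smul_eq_mul, mul_comm, hL]
  rw [← hval]
  exact hcomp

lemma taylor4 (g G1 G2 G3 G4 : ℝ → ℝ) (hg : ContDiff ℝ 4 g)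
    (h1 : ∀ t, HasDerivAt g (G1 t) t) (h2 : ∀ t, HasDerivAt G1 (G2 t) t)
    (h3 : ∀ t, HasDerivAt G2 (G3 t) t) (h4 : ∀ t, HasDerivAt G3 (G4 t) t)
    (K : ℝ) (hK : ∀ t ∈ Set.Icc (0:ℝ) 1, |G4 t| ≤ K) :
    |g 1 - g 0 - G1 0 - G2 0 / 2 - G3 0 / 6| ≤ K / 24 := by
  have huniq : UniqueDiffOn ℝ (Set.Icc (0:ℝ) 1) := uniqueDiffOn_Icc (by norm_num)
  have stepW : ∀ (m : ℕ) (Fm F' : ℝ → ℝ),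
      Set.EqOn (iteratedDerivWithin m g (Set.Icc (0:ℝ) 1)) Fm (Set.Icc (0:ℝ) 1) →
      (∀ t, HasDerivAt Fm (F' t) t) →
      Set.EqOn (iteratedDerivWithin (m+1) g (Set.Icc (0:ℝ) 1)) F' (Set.Icc (0:ℝ) 1) := by
    intro m Fm F' hEq hF t ht
    rw [iteratedDerivWithin_succ, derivWithin_congr hEq (hEq ht),
      (hF t).differentiableAt.derivWithin (huniq t ht), (hF t).deriv]
  have hW0 : Set.EqOn (iteratedDerivWithin 0 g (Set.Icc (0:ℝ) 1)) g (Set.Icc (0:ℝ) 1) := by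
    intro t ht; simp [iteratedDerivWithin_zero]
  have hW1 := stepW 0 g G1 hW0 h1
  have hW2 := stepW 1 G1 G2 hW1 h2
  have hW3 := stepW 2 G2 G3 hW2 h3
  have hW4 := stepW 3 G3 G4 hW3 h4
  have h01 : (0:ℝ) < 1 := by norm_num
  have hmem0 : (0:ℝ) ∈ Set.Icc (0:ℝ) 1 := by constructor <;> norm_num
  obtain ⟨x', hx', heq⟩ := taylor_mean_remainder_lagrange (f := g) (n := 3) h01.ne
    (by rw [Set.uIcc_of_le h01.le]; exact (hg.of_le (by norm_num)).contDiffOn)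
    (by
      rw [Set.uIcc_of_le h01.le, Set.uIoo_of_le h01.le]
      have : DifferentiableOn ℝ G3 (Set.Ioo (0:ℝ) 1) :=
        fun t _ => (h4 t).differentiableAt.differentiableWithinAt
      exact this.congr fun t ht => hW3 (Set.Ioo_subset_Icc_self ht))
  rw [Set.uIcc_of_le h01.le] at heq
  rw [Set.uIoo_of_le h01.le] at hx'
  have htay : taylorWithinEval g 3 (Set.Icc (0:ℝ) 1) 0 1
      = g 0 + G1 0 + G2 0 / 2 + G3 0 / 6 := by
    rw [taylor_within_apply]
    rw [Finset.sum_range_succ, Finset.sum_range_succ, Finset.sum_range_succ,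
      Finset.sum_range_succ, Finset.sum_range_zero]
    rw [hW0 hmem0, hW1 hmem0, hW2 hmem0, hW3 hmem0]
    norm_num [Nat.factorial]
    ring
  rw [htay] at heq
  have hrem : g 1 - (g 0 + G1 0 + G2 0 / 2 + G3 0 / 6) = G4 x' / 24 := by
    rw [heq, hW4 (Set.Ioo_subset_Icc_self hx')]
    norm_num [Nat.factorial]
  have hfin : g 1 - g 0 - G1 0 - G2 0 / 2 - G3 0 / 6 = G4 x' / 24 := by
    rw [← hrem]; ring
  rw [hfin, abs_div, abs_of_pos (by norm_num : (0:ℝ) < 24)]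
  have := hK x' (Set.Ioo_subset_Icc_self hx')
  linarith

lemma abs_sum_le_card {d : ℕ} (F : Fin d → ℝ) {b : ℝ} (hb : ∀ k, |F k| ≤ b) :
    |∑ k, F k| ≤ d * b := by
  calc |∑ k, F k| ≤ ∑ k, |F k| := Finset.abs_sum_le_sum_abs _ _
  _ ≤ ∑ _k : Fin d, b := Finset.sum_le_sum (fun k _ => hb k)
  _ = d * b := by simp [Finset.sum_const, mul_comm]

lemma mpow_zero' {d : ℕ} (v : Ed d) : mpow v (fun _ => 0) = 1 := by simp [mpow]

lemma mpow_delta {d : ℕ} (v : Ed d) (k : Fin d) :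
    mpow v (fun m => if m = k then 1 else 0) = v k := by
  simp only [mpow, pow_ite, pow_one, pow_zero]
  rw [Finset.prod_ite_eq' Finset.univ k (fun m => v m)]
  simp

lemma mpow_delta2 {d : ℕ} (v : Ed d) (a b : Fin d) :
    mpow v (fun m => (if m = a then 1 else 0) + (if m = b then 1 else 0))
      = v a * v b := by
  simp only [mpow, pow_add]
  rw [Finset.prod_mul_distrib]
  simp only [pow_ite, pow_one, pow_zero]
  rw [Finset.prod_ite_eq' Finset.univ a (fun m => v m),
    Finset.prod_ite_eq' Finset.univ b (fun m => v m)]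
  simp

lemma deg_delta {d : ℕ} (k : Fin d) : deg (fun m => if m = k then 1 else 0) = 1 := by
  simp only [deg]
  rw [Finset.sum_ite_eq' Finset.univ k (fun _ => 1)]
  simp

lemma deg_delta2 {d : ℕ} (a b : Fin d) :
    deg (fun m => (if m = a then 1 else 0) + (if m = b then 1 else 0)) = 2 := by
  simp only [deg, Finset.sum_add_distrib]
  rw [Finset.sum_ite_eq' Finset.univ a (fun _ => 1),
    Finset.sum_ite_eq' Finset.univ b (fun _ => 1)]
  simp

set_option maxHeartbeats 2000000 in
/-- Laplace approximation: second-order accuracy of the SPH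
Laplacian approximation under the regularity conditions. -/
theorem stmt_4
    (d : ℕ) (hd : d = 1 ∨ d = 2 ∨ d = 3) (σ : ℝ) (hσ : 0 < σ)
    (P : ℝ → ℝ) (hP : ContDiff ℝ 1 P)
    (hPnn : ∀ R : ℝ, 0 ≤ R → 0 ≤ P R)
    (hPsupp : ∀ R : ℝ, 1 ≤ R → P R = 0)
    (hdec : ∀ R : ℝ, 0 ≤ R → deriv P R ≤ 0) :
    ∃ C > 0, ∀ (l : ℝ), 0 < l → ∀ (h : ℝ), 0 < h → h ≤ 1 →
      ∀ (xi : Ed d), xi ∈ cube d l →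
      ∀ (n : ℕ) (x : Fin n → Ed d) (v : Fin n → ℝ),
        (∀ j, x j ∈ cube d l) →
        (∀ j, x j ≠ xi) →
        (∀ j, 0 ≤ v j) →
        (∀ α : Fin d → ℕ, deg α ≤ 2 →
          ∀ β : Fin d → ℕ, deg β = 1 →
            |∑ j, v j * mpow (x j - xi) α * mpow (gradW d σ h P (xi - x j)) β
              - (if α = β then (1 : ℝ) else 0)| ≤ h ^ 2) →
        ∀ f : Ed d → ℝ, ContDiff ℝ 4 f →
          |2 * ∑ j, v j * (f xi - f (x j)) *
              (⟪xi - x j, gradW d σ h P (xi - x j)⟫ / ‖xi - x j‖ ^ 2)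
            - lapl f xi| ≤ C * h ^ 2 * Cnorm 4 f (cube d l) := by
  classical
  have hd1 : 1 ≤ d := by rcases hd with h|h|h <;> omega
  have hdR : (1:ℝ) ≤ (d:ℝ) := by exact_mod_cast hd1
  have hd0 : (0:ℝ) < (d:ℝ) := by exact_mod_cast hd1
  refine ⟨2*(d:ℝ) + (d:ℝ)^2 + (d:ℝ)^3 + (d:ℝ)^5, by positivity, ?_⟩
  intro l hl h hh0 hh1 xi hxi n x v hxcube hxne hvnn hreg f hf
  set M := Cnorm 4 f (cube d l) with hM
  have key : ∀ ks : List (Fin d), ks.length ≤ 4 → ∀ y ∈ cube d l, |pds ks f y| ≤ M :=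
    cnorm_key hl hf
  have hM0 : 0 ≤ M := (abs_nonneg _).trans (key [] (by simp) xi hxi)
  set c : Fin n → ℝ := fun j => σ / h ^ (d+1) * deriv P (‖xi - x j‖ / h) / ‖xi - x j‖
    with hc
  -- basic facts
  have hxine : ∀ j, xi - x j ≠ 0 := fun j => sub_ne_zero.mpr (Ne.symm (hxne j))
  have hrpos : ∀ j, 0 < ‖xi - x j‖ := fun j => norm_pos_iff.mpr (hxine j)
  have hgk : ∀ j k, gradW d σ h P (xi - x j) k = -(c j * (x j - xi) k) := by
    intro j k
    show (((σ / h ^ (d + 1)) * deriv P (‖xi - x j‖ / h) / ‖xi - x j‖) • (xi - x j)) k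
      = -(c j * (x j - xi) k)
    rw [PiLp.smul_apply, PiLp.sub_apply, PiLp.sub_apply, hc, smul_eq_mul]
    ring
  have hcle : ∀ j, c j ≤ 0 := by
    intro j
    rw [hc]
    apply div_nonpos_of_nonpos_of_nonneg _ (norm_nonneg _)
    apply mul_nonpos_of_nonneg_of_nonpos
    · positivity
    · exact hdec _ (div_nonneg (norm_nonneg _) hh0.le)
  have hinner : ∀ j, ⟪xi - x j, gradW d σ h P (xi - x j)⟫ / ‖xi - x j‖ ^ 2 = c j := by
    intro j
    show ⟪xi - x j, ((σ / h ^ (d + 1)) * deriv P (‖xi - x j‖ / h) / ‖xi - x j‖) • (xi - x j)⟫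
        / ‖xi - x j‖ ^ 2 = c j
    rw [real_inner_smul_right, real_inner_self_eq_norm_sq, mul_div_assoc,
      div_self (pow_ne_zero 2 (ne_of_gt (hrpos j))), mul_one, hc]
  have hderivP0 : ∀ R : ℝ, 1 < R → deriv P R = 0 := by
    intro R hR
    have hev : P =ᶠ[nhds R] (fun _ => (0:ℝ)) :=
      Filter.eventuallyEq_of_mem (isOpen_Ioi.mem_nhds hR)
        (fun y hy => hPsupp y (le_of_lt hy))
    rw [hev.deriv_eq]
    exact deriv_const R 0
  have hczero : ∀ j, h < ‖xi - x j‖ → c j = 0 := by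
    intro j hj
    rw [hc]
    have : deriv P (‖xi - x j‖ / h) = 0 :=
      hderivP0 _ ((one_lt_div hh0).mpr hj)
    simp [this]
  have husq : ∀ j, ∑ k, (x j - xi) k * gradW d σ h P (xi - x j) k
      = -(c j) * ‖xi - x j‖ ^ 2 := by
    intro j
    have h1 : ∀ k, (x j - xi) k * gradW d σ h P (xi - x j) k
        = -(c j) * ((x j - xi) k)^2 := by
      intro k; rw [hgk j k]; ring
    rw [Finset.sum_congr rfl fun k _ => h1 k, ← Finset.mul_sum, ← norm_sq_eq_sum,
      norm_sub_rev]
  -- moment bounds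
  have mom0 : ∀ k, |∑ j, v j * gradW d σ h P (xi - x j) k| ≤ h ^ 2 := by
    intro k
    have hne : (fun _ : Fin d => 0) ≠ (fun m => if m = k then 1 else 0) := by
      intro e
      have := congrFun e k
      simp at this
    have := hreg (fun _ => 0) (by simp [deg]) (fun m => if m = k then 1 else 0)
      (deg_delta k)
    rw [if_neg hne] at this
    simpa [mpow_zero', mpow_delta] using this
  have mom1 : ∀ a k, |∑ j, v j * (x j - xi) a * gradW d σ h P (xi - x j) k
      - (if a = k then (1:ℝ) else 0)| ≤ h ^ 2 := by
    intro a k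
    have := hreg (fun m => if m = a then 1 else 0) (by rw [deg_delta]; omega)
      (fun m => if m = k then 1 else 0) (deg_delta k)
    have hiff : (if (fun m : Fin d => if m = a then (1:ℕ) else 0)
        = (fun m => if m = k then 1 else 0) then (1:ℝ) else 0)
        = (if a = k then (1:ℝ) else 0) := by
      by_cases hak : a = k
      · subst hak; simp
      · rw [if_neg hak, if_neg]
        intro e
        have := congrFun e a
        simp [hak] at this
    rw [hiff] at this
    simpa [mpow_delta] using this
  have mom2 : ∀ a b k, |∑ j, v j * ((x j - xi) a * (x j - xi) b)
      * gradW d σ h P (xi - x j) k| ≤ h ^ 2 := by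
    intro a b k
    have := hreg (fun m => (if m = a then 1 else 0) + (if m = b then 1 else 0))
      (by rw [deg_delta2]) (fun m => if m = k then 1 else 0) (deg_delta k)
    have hne : (fun m : Fin d => (if m = a then (1:ℕ) else 0) + (if m = b then 1 else 0))
        ≠ (fun m => if m = k then 1 else 0) := by
      intro e
      have := congrArg deg e
      rw [deg_delta2, deg_delta] at this
      omega
    rw [if_neg hne] at this
    simpa [mpow_delta2, mpow_delta] using this
  -- differentiability facts
  have hfd : ∀ ks : List (Fin d), ks.length ≤ 3 → Differentiable ℝ (pds ks f) := by
    intro ks hks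
    have h1 : ContDiff ℝ ((1:ℕ) : WithTop ℕ∞) (pds ks f) := by
      apply contDiff_pds
      apply hf.of_le
      have : 1 + ks.length ≤ 4 := by omega
      exact_mod_cast Nat.cast_le.mpr this
    exact h1.differentiable (by simp)
  have hfd0 : Differentiable ℝ f := hf.differentiable (by norm_num)
  -- Taylor expansion with remainder for each j
  have taylor : ∀ j, ∃ ρ : ℝ, |ρ| ≤ (d:ℝ)^4 * M * ‖xi - x j‖^4 / 24 ∧
      f xi - f (x j) = -(∑ k, pd k f xi * (x j - xi) k)
        - (∑ m, (∑ k, pd k (pd m f) xi * (x j - xi) k) * (x j - xi) m) / 2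
        - (∑ m, (∑ k, (∑ p, pd p (pd k (pd m f)) xi * (x j - xi) p) * (x j - xi) k)
            * (x j - xi) m) / 6 + ρ := by
    intro j
    set uu : Ed d := x j - xi with huu
    set γ : ℝ → Ed d := fun t => xi + t • uu with hγ
    have hγ0 : γ 0 = xi := by rw [hγ]; simp
    have hγ1 : γ 1 = x j := by rw [hγ, huu]; simp
    have hmemγ : ∀ t ∈ Set.Icc (0:ℝ) 1, γ t ∈ cube d l := by
      intro t ht
      exact cube_segment hxi (hxcube j) ht
    have h1 : ∀ t, HasDerivAt (fun s => f (γ s)) (∑ k, pd k f (γ t) * uu k) t :=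
      fun t => step (F := f) hfd0 xi uu t
    have h2 : ∀ t, HasDerivAt (fun s => ∑ k, pd k f (γ s) * uu k)
        (∑ m, (∑ k, pd k (pd m f) (γ t) * uu k) * uu m) t := by
      intro t
      exact HasDerivAt.fun_sum fun m _ =>
        (step (F := pd m f) (hfd [m] (by simp)) xi uu t).mul_const (uu m)
    have h3 : ∀ t, HasDerivAt (fun s => ∑ m, (∑ k, pd k (pd m f) (γ s) * uu k) * uu m)
        (∑ m, (∑ k, (∑ p, pd p (pd k (pd m f)) (γ t) * uu p) * uu k) * uu m) t := by
      intro t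
      exact HasDerivAt.fun_sum fun m _ =>
        ((HasDerivAt.fun_sum fun k _ =>
          (step (F := pd k (pd m f)) (hfd [k, m] (by simp)) xi uu t).mul_const (uu k)).mul_const
          (uu m))
    have h4 : ∀ t, HasDerivAt
        (fun s => ∑ m, (∑ k, (∑ p, pd p (pd k (pd m f)) (γ s) * uu p) * uu k) * uu m)
        (∑ m, (∑ k, (∑ p, (∑ q, pd q (pd p (pd k (pd m f))) (γ t) * uu q) * uu p) * uu k)
          * uu m) t := by
      intro t
      exact HasDerivAt.fun_sum fun m _ =>
        ((HasDerivAt.fun_sum fun k _ =>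
          ((HasDerivAt.fun_sum fun p _ =>
            (step (F := pd p (pd k (pd m f))) (hfd [p, k, m] (by simp)) xi uu t).mul_const
              (uu p)).mul_const (uu k))).mul_const (uu m))
    have hγc : ContDiff ℝ 4 (fun s => f (γ s)) := by
      apply hf.comp
      exact contDiff_const.add (contDiff_id.smul contDiff_const)
    have hcoord : ∀ k, |uu k| ≤ ‖xi - x j‖ := by
      intro k
      have := coord_abs_le_norm uu k
      rwa [huu, norm_sub_rev] at this
    have hrj0 : (0:ℝ) ≤ ‖xi - x j‖ := norm_nonneg _
    have hK : ∀ t ∈ Set.Icc (0:ℝ) 1,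
        |∑ m, (∑ k, (∑ p, (∑ q, pd q (pd p (pd k (pd m f))) (γ t) * uu q) * uu p) * uu k)
          * uu m| ≤ (d:ℝ)^4 * M * ‖xi - x j‖^4 := by
      intro t ht
      have l4 : ∀ q p k m, |pd q (pd p (pd k (pd m f))) (γ t) * uu q| ≤ M * ‖xi - x j‖ := by
        intro q p k m
        rw [abs_mul]
        have hpds : |pd q (pd p (pd k (pd m f))) (γ t)| ≤ M := by
          have := key [q, p, k, m] (by simp) (γ t) (hmemγ t ht)
          simpa using this
        exact mul_le_mul hpds (hcoord q) (abs_nonneg _) hM0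
      have l3 : ∀ p k m, |(∑ q, pd q (pd p (pd k (pd m f))) (γ t) * uu q) * uu p|
          ≤ ((d:ℝ) * (M * ‖xi - x j‖)) * ‖xi - x j‖ := by
        intro p k m
        rw [abs_mul]
        exact mul_le_mul (abs_sum_le_card _ (fun q => l4 q p k m)) (hcoord p)
          (abs_nonneg _) (by positivity)
      have l2 : ∀ k m, |(∑ p, (∑ q, pd q (pd p (pd k (pd m f))) (γ t) * uu q) * uu p) * uu k|
          ≤ ((d:ℝ) * (((d:ℝ) * (M * ‖xi - x j‖)) * ‖xi - x j‖)) * ‖xi - x j‖ := by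
        intro k m
        rw [abs_mul]
        exact mul_le_mul (abs_sum_le_card _ (fun p => l3 p k m)) (hcoord k)
          (abs_nonneg _) (by positivity)
      have l1 : ∀ m, |(∑ k, (∑ p, (∑ q, pd q (pd p (pd k (pd m f))) (γ t) * uu q) * uu p)
          * uu k) * uu m|
          ≤ ((d:ℝ) * (((d:ℝ) * (((d:ℝ) * (M * ‖xi - x j‖)) * ‖xi - x j‖)) * ‖xi - x j‖))
            * ‖xi - x j‖ := by
        intro m
        rw [abs_mul]
        exact mul_le_mul (abs_sum_le_card _ (fun k => l2 k m)) (hcoord m)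
          (abs_nonneg _) (by positivity)
      have := abs_sum_le_card _ l1
      calc |∑ m, (∑ k, (∑ p, (∑ q, pd q (pd p (pd k (pd m f))) (γ t) * uu q) * uu p) * uu k)
          * uu m| ≤ (d:ℝ) * (((d:ℝ) * (((d:ℝ) * (((d:ℝ) * (M * ‖xi - x j‖)) * ‖xi - x j‖))
            * ‖xi - x j‖)) * ‖xi - x j‖) := this
      _ = (d:ℝ)^4 * M * ‖xi - x j‖^4 := by ring
    have htay := taylor4 (fun s => f (γ s)) _ _ _ _ hγc h1 h2 h3 h4 _ hK
    refine ⟨-(f (γ 1) - f (γ 0) - (∑ k, pd k f (γ 0) * uu k)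
      - (∑ m, (∑ k, pd k (pd m f) (γ 0) * uu k) * uu m) / 2
      - (∑ m, (∑ k, (∑ p, pd p (pd k (pd m f)) (γ 0) * uu p) * uu k) * uu m) / 6), ?_, ?_⟩
    · rw [abs_neg]
      calc |f (γ 1) - f (γ 0) - (∑ k, pd k f (γ 0) * uu k)
          - (∑ m, (∑ k, pd k (pd m f) (γ 0) * uu k) * uu m) / 2
          - (∑ m, (∑ k, (∑ p, pd p (pd k (pd m f)) (γ 0) * uu p) * uu k) * uu m) / 6|
          ≤ ((d:ℝ)^4 * M * ‖xi - x j‖^4) / 24 := htay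
      _ = (d:ℝ)^4 * M * ‖xi - x j‖^4 / 24 := by ring
    · rw [hγ0, hγ1]
      ring
  choose ρ hρb hρe using taylor
  -- the four partial sums
  set A1 : ℝ := ∑ j, v j * (∑ k, pd k f xi * (x j - xi) k) * c j with hA1def
  set A2 : ℝ := ∑ j, v j * (∑ m, (∑ k, pd k (pd m f) xi * (x j - xi) k) * (x j - xi) m)
    * c j with hA2def
  set A3 : ℝ := ∑ j, v j * (∑ m, (∑ k, (∑ p, pd p (pd k (pd m f)) xi * (x j - xi) p)
    * (x j - xi) k) * (x j - xi) m) * c j with hA3def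
  set AR : ℝ := ∑ j, v j * ρ j * c j with hARdef
  have hsplit : (∑ j, v j * (f xi - f (x j)) *
      (⟪xi - x j, gradW d σ h P (xi - x j)⟫ / ‖xi - x j‖ ^ 2))
      = -A1 - A2 / 2 - A3 / 6 + AR := by
    have e0 : ∀ j ∈ Finset.univ, v j * (f xi - f (x j)) *
        (⟪xi - x j, gradW d σ h P (xi - x j)⟫ / ‖xi - x j‖ ^ 2)
        = -(v j * (∑ k, pd k f xi * (x j - xi) k) * c j)
          + -(v j * (∑ m, (∑ k, pd k (pd m f) xi * (x j - xi) k) * (x j - xi) m) * c j / 2)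
          + -(v j * (∑ m, (∑ k, (∑ p, pd p (pd k (pd m f)) xi * (x j - xi) p)
              * (x j - xi) k) * (x j - xi) m) * c j / 6)
          + v j * ρ j * c j := by
      intro j _
      rw [hinner j, hρe j]
      ring
    rw [Finset.sum_congr rfl e0, Finset.sum_add_distrib, Finset.sum_add_distrib,
      Finset.sum_add_distrib, Finset.sum_neg_distrib, Finset.sum_neg_distrib,
      Finset.sum_neg_distrib, ← Finset.sum_div, ← Finset.sum_div,
      hA1def, hA2def, hA3def, hARdef]
    ring
  -- Bound on A1
  have hA1eq : A1 = ∑ k, pd k f xi * (-(∑ j, v j * gradW d σ h P (xi - x j) k)) := by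
    rw [hA1def]
    have e1 : ∀ j ∈ Finset.univ, v j * (∑ k, pd k f xi * (x j - xi) k) * c j
        = ∑ k, pd k f xi * (-(v j * gradW d σ h P (xi - x j) k)) := by
      intro j _
      rw [Finset.mul_sum, Finset.sum_mul]
      exact Finset.sum_congr rfl fun k _ => by rw [hgk j k]; ring
    rw [Finset.sum_congr rfl e1, Finset.sum_comm]
    exact Finset.sum_congr rfl fun k _ => by
      rw [← Finset.mul_sum, Finset.sum_neg_distrib]
  have hb1 : |A1| ≤ (d:ℝ) * (M * h ^ 2) := by
    rw [hA1eq]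
    apply abs_sum_le_card
    intro k
    rw [abs_mul, abs_neg]
    have hpd : |pd k f xi| ≤ M := by simpa using key [k] (by simp) xi hxi
    exact mul_le_mul hpd (mom0 k) (abs_nonneg _) hM0
  -- Bound on A2 (with Laplacian)
  have hA2eq : A2 = -(∑ m, ∑ k, pd k (pd m f) xi
      * (∑ j, v j * (x j - xi) m * gradW d σ h P (xi - x j) k)) := by
    rw [hA2def]
    have e2 : ∀ j ∈ Finset.univ,
        v j * (∑ m, (∑ k, pd k (pd m f) xi * (x j - xi) k) * (x j - xi) m) * c j
        = ∑ m, ∑ k, pd k (pd m f) xi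
            * (-(v j * (x j - xi) m * gradW d σ h P (xi - x j) k)) := by
      intro j _
      rw [Finset.mul_sum, Finset.sum_mul]
      refine Finset.sum_congr rfl fun m _ => ?_
      rw [Finset.sum_mul, Finset.mul_sum, Finset.sum_mul]
      exact Finset.sum_congr rfl fun k _ => by rw [hgk j k]; ring
    rw [Finset.sum_congr rfl e2, Finset.sum_comm, ← Finset.sum_neg_distrib]
    refine Finset.sum_congr rfl fun m _ => ?_
    rw [Finset.sum_comm, ← Finset.sum_neg_distrib]
    refine Finset.sum_congr rfl fun k _ => ?_
    rw [← Finset.mul_sum, Finset.sum_neg_distrib]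
    ring
  have hlap : lapl f xi = ∑ m, ∑ k, pd k (pd m f) xi
      * (if m = k then (1:ℝ) else 0) := by
    have e3 : ∀ m ∈ Finset.univ, ∑ k, pd k (pd m f) xi * (if m = k then (1:ℝ) else 0)
        = pd m (pd m f) xi := by
      intro m _
      have : ∀ k ∈ Finset.univ, pd k (pd m f) xi * (if m = k then (1:ℝ) else 0)
          = if m = k then pd k (pd m f) xi else 0 := by
        intro k _
        rw [mul_ite, mul_one, mul_zero]
      rw [Finset.sum_congr rfl this, Finset.sum_ite_eq Finset.univ m]
      simp
    rw [Finset.sum_congr rfl e3]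
    rfl
  have hb2 : |(-A2) - lapl f xi| ≤ (d:ℝ) * ((d:ℝ) * (M * h ^ 2)) := by
    have heq2 : (-A2) - lapl f xi = ∑ m, ∑ k, pd k (pd m f) xi
        * ((∑ j, v j * (x j - xi) m * gradW d σ h P (xi - x j) k)
          - (if m = k then (1:ℝ) else 0)) := by
      rw [hA2eq, neg_neg, hlap, ← Finset.sum_sub_distrib]
      refine Finset.sum_congr rfl fun m _ => ?_
      rw [← Finset.sum_sub_distrib]
      exact Finset.sum_congr rfl fun k _ => by rw [← mul_sub]
    rw [heq2]
    apply abs_sum_le_card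
    intro m
    apply abs_sum_le_card
    intro k
    rw [abs_mul]
    have hpd : |pd k (pd m f) xi| ≤ M := by simpa using key [k, m] (by simp) xi hxi
    exact mul_le_mul hpd (mom1 m k) (abs_nonneg _) hM0
  -- Bound on A3
  have hA3eq : A3 = -(∑ m, ∑ k, ∑ p, pd p (pd k (pd m f)) xi
      * (∑ j, v j * ((x j - xi) k * (x j - xi) m) * gradW d σ h P (xi - x j) p)) := by
    rw [hA3def]
    have e4 : ∀ j ∈ Finset.univ,
        v j * (∑ m, (∑ k, (∑ p, pd p (pd k (pd m f)) xi * (x j - xi) p) * (x j - xi) k)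
          * (x j - xi) m) * c j
        = ∑ m, ∑ k, ∑ p, pd p (pd k (pd m f)) xi
            * (-(v j * ((x j - xi) k * (x j - xi) m) * gradW d σ h P (xi - x j) p)) := by
      intro j _
      rw [Finset.mul_sum, Finset.sum_mul]
      refine Finset.sum_congr rfl fun m _ => ?_
      rw [Finset.sum_mul, Finset.mul_sum, Finset.sum_mul]
      refine Finset.sum_congr rfl fun k _ => ?_
      rw [Finset.sum_mul, Finset.sum_mul, Finset.mul_sum, Finset.sum_mul]
      exact Finset.sum_congr rfl fun p _ => by rw [hgk j p]; ring
    rw [Finset.sum_congr rfl e4, Finset.sum_comm, ← Finset.sum_neg_distrib]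
    refine Finset.sum_congr rfl fun m _ => ?_
    rw [Finset.sum_comm, ← Finset.sum_neg_distrib]
    refine Finset.sum_congr rfl fun k _ => ?_
    rw [Finset.sum_comm, ← Finset.sum_neg_distrib]
    refine Finset.sum_congr rfl fun p _ => ?_
    rw [← Finset.mul_sum, Finset.sum_neg_distrib]
    ring
  have hb3 : |A3| ≤ (d:ℝ) * ((d:ℝ) * ((d:ℝ) * (M * h ^ 2))) := by
    rw [hA3eq, abs_neg]
    apply abs_sum_le_card
    intro m
    apply abs_sum_le_card
    intro k
    apply abs_sum_le_card
    intro p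
    rw [abs_mul]
    have hpd : |pd p (pd k (pd m f)) xi| ≤ M := by
      simpa using key [p, k, m] (by simp) xi hxi
    exact mul_le_mul hpd (mom2 k m p) (abs_nonneg _) hM0
  -- Bound on the remainder term
  have hbR : |AR| ≤ (d:ℝ)^5 * M * h ^ 2 / 12 := by
    have hr4 : ∀ j, ‖xi - x j‖ ^ 4 * (-(c j))
        ≤ h ^ 2 * ∑ k, (x j - xi) k * gradW d σ h P (xi - x j) k := by
      intro j
      rw [husq j]
      rcases le_or_gt ‖xi - x j‖ h with hle | hgt
      · have hcn : 0 ≤ -(c j) := neg_nonneg.mpr (hcle j)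
        have hr2 : ‖xi - x j‖ ^ 2 ≤ h ^ 2 := by nlinarith [hrpos j]
        nlinarith [mul_nonneg (sub_nonneg.mpr hr2)
          (mul_nonneg hcn (sq_nonneg ‖xi - x j‖))]
      · rw [hczero j hgt]
        simp
    have hWkk : ∀ k : Fin d,
        ∑ j, v j * (x j - xi) k * gradW d σ h P (xi - x j) k ≤ 2 := by
      intro k
      have := mom1 k k
      rw [if_pos rfl] at this
      have h2le : h ^ 2 ≤ 1 := by nlinarith
      have := abs_le.mp this
      linarith [this.2]
    calc |AR| ≤ ∑ j, |v j * ρ j * c j| := by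
          rw [hARdef]; exact Finset.abs_sum_le_sum_abs _ _
    _ ≤ ∑ j, v j * ((d:ℝ)^4 * M * ‖xi - x j‖^4 / 24) * (-(c j)) := by
        apply Finset.sum_le_sum
        intro j _
        rw [abs_mul, abs_mul, abs_of_nonneg (hvnn j), abs_of_nonpos (hcle j)]
        exact mul_le_mul_of_nonneg_right
          (mul_le_mul_of_nonneg_left (hρb j) (hvnn j))
          (neg_nonneg.mpr (hcle j))
    _ = ((d:ℝ)^4 * M / 24) * ∑ j, v j * (‖xi - x j‖^4 * (-(c j))) := by
        rw [Finset.mul_sum]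
        exact Finset.sum_congr rfl fun j _ => by ring
    _ ≤ ((d:ℝ)^4 * M / 24) * (h ^ 2 * ((d:ℝ) * 2)) := by
        apply mul_le_mul_of_nonneg_left _ (by positivity)
        calc ∑ j, v j * (‖xi - x j‖^4 * (-(c j)))
            ≤ ∑ j, v j * (h ^ 2 * ∑ k, (x j - xi) k * gradW d σ h P (xi - x j) k) :=
          Finset.sum_le_sum fun j _ => mul_le_mul_of_nonneg_left (hr4 j) (hvnn j)
        _ = h ^ 2 * ∑ k, ∑ j, v j * (x j - xi) k * gradW d σ h P (xi - x j) k := by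
            have e5 : ∀ j ∈ Finset.univ,
                v j * (h ^ 2 * ∑ k, (x j - xi) k * gradW d σ h P (xi - x j) k)
                = ∑ k, h ^ 2 * (v j * (x j - xi) k * gradW d σ h P (xi - x j) k) := by
              intro j _
              rw [Finset.mul_sum, Finset.mul_sum]
              exact Finset.sum_congr rfl fun k _ => by ring
            rw [Finset.sum_congr rfl e5, Finset.sum_comm, Finset.mul_sum]
            exact Finset.sum_congr rfl fun k _ => by rw [← Finset.mul_sum]
        _ ≤ h ^ 2 * ((d:ℝ) * 2) := by
            apply mul_le_mul_of_nonneg_left _ (sq_nonneg h)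
            calc ∑ k, ∑ j, v j * (x j - xi) k * gradW d σ h P (xi - x j) k
                ≤ ∑ _k : Fin d, (2:ℝ) := Finset.sum_le_sum fun k _ => hWkk k
            _ = (d:ℝ) * 2 := by simp [mul_comm]
    _ = (d:ℝ)^5 * M * h ^ 2 / 12 := by ring
  -- final assembly
  rw [hsplit]
  have hid : 2 * (-A1 - A2 / 2 - A3 / 6 + AR) - lapl f xi
      = (-2) * A1 + ((-A2) - lapl f xi) + (-A3) / 3 + 2 * AR := by ring
  rw [hid]
  have tineq : |(-2) * A1 + ((-A2) - lapl f xi) + (-A3) / 3 + 2 * AR|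
      ≤ 2 * |A1| + |(-A2) - lapl f xi| + |A3| / 3 + 2 * |AR| := by
    have t1 := abs_add_le ((-2) * A1 + ((-A2) - lapl f xi) + (-A3) / 3) (2 * AR)
    have t2 := abs_add_le ((-2) * A1 + ((-A2) - lapl f xi)) ((-A3) / 3)
    have t3 := abs_add_le ((-2) * A1) ((-A2) - lapl f xi)
    have e6 : |(-2) * A1| = 2 * |A1| := by rw [abs_mul]; norm_num
    have e7 : |(-A3) / 3| = |A3| / 3 := by rw [abs_div, abs_neg]; norm_num
    have e8 : |2 * AR| = 2 * |AR| := by rw [abs_mul]; norm_num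
    linarith
  have hfin : 2 * ((d:ℝ) * (M * h ^ 2)) + (d:ℝ) * ((d:ℝ) * (M * h ^ 2))
      + ((d:ℝ) * ((d:ℝ) * ((d:ℝ) * (M * h ^ 2)))) / 3 + 2 * ((d:ℝ)^5 * M * h ^ 2 / 12)
      ≤ (2*(d:ℝ) + (d:ℝ)^2 + (d:ℝ)^3 + (d:ℝ)^5) * h ^ 2 * M := by
    have c3 : 0 ≤ (d:ℝ)^3 * M * h ^ 2 :=
      mul_nonneg (mul_nonneg (by positivity) hM0) (sq_nonneg h)
    have c5 : 0 ≤ (d:ℝ)^5 * M * h ^ 2 :=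
      mul_nonneg (mul_nonneg (by positivity) hM0) (sq_nonneg h)
    nlinarith [c3, c5]
  calc |(-2) * A1 + ((-A2) - lapl f xi) + (-A3) / 3 + 2 * AR|
      ≤ 2 * |A1| + |(-A2) - lapl f xi| + |A3| / 3 + 2 * |AR| := tineq
  _ ≤ 2 * ((d:ℝ) * (M * h ^ 2)) + (d:ℝ) * ((d:ℝ) * (M * h ^ 2))
      + ((d:ℝ) * ((d:ℝ) * ((d:ℝ) * (M * h ^ 2)))) / 3
      + 2 * ((d:ℝ)^5 * M * h ^ 2 / 12) := by
    have := hb1; have := hb2; have := hb3; have := hbR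
    linarith
  _ ≤ (2*(d:ℝ) + (d:ℝ)^2 + (d:ℝ)^3 + (d:ℝ)^5) * h ^ 2 * M := hfin
end
end

section
/- (Barrier comparison.) In the particle setting, assume the system is connected to the boundary. Let w = (w_1,…,w_N) be a grid function with w_i ≥ 0 for all 1 ≤ i ≤ N and ℒ_h w_i ≥ 1 for every interior index i. If U = (U_1,…,U_N) satisfies ℒ_h U_i = f_i for every interior index i and U_i = 0 for every boundary index i, then max_{1≤i≤N} |U_i| ≤ (max_{N_in < i ≤ N} w_i) · (max_{1≤i≤N_in} |f_i|). -/
open scoped BigOperators RealInnerProductSpace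
open Finset MeasureTheory

noncomputable section

/-- Coefficient `c_{i,j} = −V_{i,j}(a_i+a_j)((x_i−x_j)·∇W(x_i−x_j))/‖x_i−x_j‖²`. -/
def cSPH (d N : ℕ) (σ h : ℝ) (P : ℝ → ℝ) (x : Fin N → Ed d)
    (a : Fin N → ℝ) (V : Fin N → Fin N → ℝ) (i j : Fin N) : ℝ :=
  -(V i j * ((a i + a j) *
      (⟪x i - x j, gradW d σ h P (x i - x j)⟫ / ‖x i - x j‖ ^ 2)))

/-- Discrete operator `ℒ_h U i = ∑_{j ≠ i} c_{i,j}(U_j − U_i)`. -/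
def Lh (d N : ℕ) (σ h : ℝ) (P : ℝ → ℝ) (x : Fin N → Ed d)
    (a : Fin N → ℝ) (V : Fin N → Fin N → ℝ) (U : Fin N → ℝ) (i : Fin N) : ℝ :=
  ∑ j ∈ Finset.univ.erase i, cSPH d N σ h P x a V i j * (U j - U i)

/-- The particle system is connected to the boundary: from every interior
index there is a chain of positive coefficients, through interior indices,
reaching a boundary index. -/
def ConnBd (Nin : ℕ) {N : ℕ} (c : Fin N → Fin N → ℝ) : Prop :=
  ∀ i : Fin N, (i : ℕ) < Nin →
    ∃ (m : ℕ) (p : Fin (m + 1) → Fin N),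
      p 0 = i ∧ Nin ≤ (p (Fin.last m) : ℕ) ∧
      (∀ k : Fin m, (p k.castSucc : ℕ) < Nin) ∧
      (∀ k : Fin m, 0 < c (p k.castSucc) (p k.succ))

/-- Discrete maximum principle: a subsolution attains its maximum at a
boundary index. -/
lemma maxpr {N Nin : ℕ} (hNN : Nin < N) (c : Fin N → Fin N → ℝ)
    (hc : ∀ i j : Fin N, (i : ℕ) < Nin → j ≠ i → 0 ≤ c i j)
    (hconn : ConnBd Nin c) (g : Fin N → ℝ)
    (hg : ∀ i : Fin N, (i : ℕ) < Nin →
      0 ≤ ∑ j ∈ Finset.univ.erase i, c i j * (g j - g i)) :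
    ∃ j : Fin N, Nin ≤ (j : ℕ) ∧ ∀ i, g i ≤ g j := by
  have hN : 0 < N := lt_of_le_of_lt (Nat.zero_le _) hNN
  obtain ⟨i₀, -, hmax⟩ := Finset.exists_max_image Finset.univ g
    ⟨⟨0, hN⟩, Finset.mem_univ _⟩
  have hmax' : ∀ i : Fin N, g i ≤ g i₀ := fun i => hmax i (Finset.mem_univ _)
  -- key propagation step
  have key : ∀ i : Fin N, (i : ℕ) < Nin → g i = g i₀ →
      ∀ j : Fin N, 0 < c i j → g j = g i₀ := by
    intro i hi hgi j hcj
    by_cases hji : j = i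
    · rw [hji, hgi]
    · have hterms : ∀ k ∈ Finset.univ.erase i, c i k * (g k - g i) ≤ 0 := by
        intro k hk
        have hkne : k ≠ i := (Finset.mem_erase.1 hk).1
        exact mul_nonpos_of_nonneg_of_nonpos (hc i k hi hkne)
          (by have := hmax' k; linarith [hgi])
      have hsum0 : ∑ k ∈ Finset.univ.erase i, c i k * (g k - g i) = 0 :=
        le_antisymm (Finset.sum_nonpos hterms) (hg i hi)
      have hjz : c i j * (g j - g i) = 0 :=
        (Finset.sum_eq_zero_iff_of_nonpos hterms).1 hsum0 j
          (Finset.mem_erase.2 ⟨hji, Finset.mem_univ _⟩)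
      have : g j - g i = 0 := by
        rcases mul_eq_zero.1 hjz with h' | h'
        · exact absurd h' (ne_of_gt hcj)
        · exact h'
      linarith [hgi]
  by_cases hi₀ : Nin ≤ (i₀ : ℕ)
  · exact ⟨i₀, hi₀, hmax'⟩
  · push_neg at hi₀
    obtain ⟨m, p, hp0, hplast, hpint, hpc⟩ := hconn i₀ hi₀
    have hchain : ∀ k : ℕ, (hk : k ≤ m) →
        g (p ⟨k, Nat.lt_succ_of_le hk⟩) = g i₀ := by
      intro k
      induction k with
      | zero => intro hk; simpa using congrArg g hp0
      | succ n ih =>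
        intro hk
        have hn : n < m := hk
        have hnm : n ≤ m := Nat.le_of_lt hn
        have hcs : (⟨n, hn⟩ : Fin m).castSucc = ⟨n, Nat.lt_succ_of_le hnm⟩ :=
          rfl
        have hsc : (⟨n, hn⟩ : Fin m).succ = ⟨n + 1, Nat.lt_succ_of_le hk⟩ :=
          rfl
        have h1 := hpint ⟨n, hn⟩
        have h2 := hpc ⟨n, hn⟩
        rw [hcs] at h1 h2
        rw [hsc] at h2
        exact key _ h1 (ih hnm) _ h2
    have hlastg : g (p (Fin.last m)) = g i₀ := by
      have := hchain m le_rfl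
      simpa [Fin.last] using this
    exact ⟨p (Fin.last m), hplast, fun i => hlastg ▸ hmax' i⟩

/-- Barrier comparison: if `w ≥ 0` with `ℒ_h w ≥ 1` at interior
indices, and `ℒ_h U = f` at interior indices with `U = 0` on the boundary,
then `max |U| ≤ (max_boundary w)·(max_interior |f|)`. -/
theorem stmt_9
    (d N Nin : ℕ) (hd : 1 ≤ d) (hNin0 : 0 < Nin) (hNinN : Nin < N)
    (l σ h : ℝ) (hl : 0 < l) (hσ : 0 < σ) (hh : 0 < h)
    (P : ℝ → ℝ) (hP : ContDiff ℝ 1 P)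
    (hPnn : ∀ R : ℝ, 0 ≤ R → 0 ≤ P R)
    (hPsupp : ∀ R : ℝ, 1 ≤ R → P R = 0)
    (hdec : ∀ R : ℝ, 0 ≤ R → deriv P R ≤ 0)
    (x : Fin N → Ed d) (hxinj : Function.Injective x)
    (hxΩ : ∀ i, x i ∈ cube d l)
    (hint : ∀ i : Fin N, (i : ℕ) < Nin → x i ∈ interior (cube d l))
    (hbd : ∀ i : Fin N, Nin ≤ (i : ℕ) → x i ∈ frontier (cube d l))
    (a : Fin N → ℝ) (ha : ∀ i, 0 < a i)
    (V : Fin N → Fin N → ℝ)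
    (hV : ∀ i j : Fin N, (i : ℕ) < Nin → j ≠ i → 0 ≤ V i j)
    (hconn : ConnBd Nin (cSPH d N σ h P x a V))
    (w : Fin N → ℝ) (hw : ∀ i, 0 ≤ w i)
    (hLw : ∀ i : Fin N, (i : ℕ) < Nin → 1 ≤ Lh d N σ h P x a V w i)
    (f U : Fin N → ℝ)
    (hU : ∀ i : Fin N, (i : ℕ) < Nin → Lh d N σ h P x a V U i = f i)
    (hU0 : ∀ i : Fin N, Nin ≤ (i : ℕ) → U i = 0) :
    ∀ i : Fin N, |U i| ≤
      sSup {y : ℝ | ∃ j : Fin N, Nin ≤ (j : ℕ) ∧ y = w j} *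
        sSup {y : ℝ | ∃ j : Fin N, (j : ℕ) < Nin ∧ y = |f j|} := by
  have hN : 0 < N := lt_of_le_of_lt (Nat.zero_le _) hNinN
  set c : Fin N → Fin N → ℝ := cSPH d N σ h P x a V with hcdef
  -- coefficients are nonnegative
  have hc : ∀ i j : Fin N, (i : ℕ) < Nin → j ≠ i → 0 ≤ c i j := by
    intro i j hi hji
    have hxne : x i - x j ≠ 0 := sub_ne_zero.2 fun e => hji (hxinj e).symm
    have hnorm : 0 < ‖x i - x j‖ := norm_pos_iff.2 hxne
    have hr : (σ / h ^ (d + 1)) * deriv P (‖x i - x j‖ / h) / ‖x i - x j‖ ≤ 0 := by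
      have hd1 : deriv P (‖x i - x j‖ / h) ≤ 0 :=
        hdec _ (div_nonneg (norm_nonneg _) hh.le)
      have hpos : 0 < σ / h ^ (d + 1) := div_pos hσ (pow_pos hh _)
      exact div_nonpos_of_nonpos_of_nonneg (mul_nonpos_of_nonneg_of_nonpos hpos.le hd1)
        hnorm.le
    have hinner : ⟪x i - x j, gradW d σ h P (x i - x j)⟫ ≤ 0 := by
      rw [gradW, real_inner_smul_right]
      exact mul_nonpos_of_nonpos_of_nonneg hr (real_inner_self_nonneg)
    have hq : ⟪x i - x j, gradW d σ h P (x i - x j)⟫ / ‖x i - x j‖ ^ 2 ≤ 0 :=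
      div_nonpos_of_nonpos_of_nonneg hinner (by positivity)
    have haij : 0 < a i + a j := add_pos (ha i) (ha j)
    have : V i j * ((a i + a j) * (⟪x i - x j, gradW d σ h P (x i - x j)⟫ /
        ‖x i - x j‖ ^ 2)) ≤ 0 :=
      mul_nonpos_of_nonneg_of_nonpos (hV i j hi hji)
        (mul_nonpos_of_nonneg_of_nonpos haij.le hq)
    simpa [hcdef, cSPH] using neg_nonneg.2 this
  -- the two suprema
  set Wb := sSup {y : ℝ | ∃ j : Fin N, Nin ≤ (j : ℕ) ∧ y = w j} with hWb
  set F := sSup {y : ℝ | ∃ j : Fin N, (j : ℕ) < Nin ∧ y = |f j|} with hF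
  have hfinW : {y : ℝ | ∃ j : Fin N, Nin ≤ (j : ℕ) ∧ y = w j}.Finite :=
    Set.Finite.subset (Set.finite_range w) (by rintro y ⟨j, -, rfl⟩; exact ⟨j, rfl⟩)
  have hfinF : {y : ℝ | ∃ j : Fin N, (j : ℕ) < Nin ∧ y = |f j|}.Finite :=
    Set.Finite.subset (Set.finite_range fun j => |f j|)
      (by rintro y ⟨j, -, rfl⟩; exact ⟨j, rfl⟩)
  have hWle : ∀ j : Fin N, Nin ≤ (j : ℕ) → w j ≤ Wb :=
    fun j hj => le_csSup hfinW.bddAbove ⟨j, hj, rfl⟩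
  have hFle : ∀ j : Fin N, (j : ℕ) < Nin → |f j| ≤ F :=
    fun j hj => le_csSup hfinF.bddAbove ⟨j, hj, rfl⟩
  have hW0 : 0 ≤ Wb := le_trans (hw ⟨Nin, hNinN⟩) (hWle ⟨Nin, hNinN⟩ le_rfl)
  have hF0 : 0 ≤ F := le_trans (abs_nonneg _) (hFle ⟨0, hN⟩ hNin0)
  -- linearity of the discrete operator
  have hsplit : ∀ (s : ℝ) (i : Fin N),
      ∑ j ∈ Finset.univ.erase i, c i j * ((s * U j + F * w j) - (s * U i + F * w i))
        = s * Lh d N σ h P x a V U i + F * Lh d N σ h P x a V w i := by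
    intro s i
    unfold Lh
    rw [Finset.mul_sum, Finset.mul_sum, ← Finset.sum_add_distrib]
    exact Finset.sum_congr rfl fun j _ => by rw [hcdef]; ring
  -- apply the maximum principle to ±U + F·w
  have happ : ∀ s : ℝ, s = 1 ∨ s = -1 → ∀ i : Fin N, s * U i ≤ Wb * F := by
    intro s hs i
    obtain ⟨jb, hjb, hjmax⟩ := maxpr hNinN c hc hconn (fun i => s * U i + F * w i)
      (by
        intro i hi
        rw [hsplit s i, hU i hi]
        have h1 : F ≤ F * Lh d N σ h P x a V w i :=
          le_mul_of_one_le_right hF0 (hLw i hi)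
        have h2 : |f i| ≤ F := hFle i hi
        have h3 := abs_le.1 (le_refl |f i|)
        rcases hs with rfl | rfl
        · linarith [neg_abs_le (f i)]
        · linarith [le_abs_self (f i)])
    have h4 := hjmax i
    have h5 : U jb = 0 := hU0 jb hjb
    have h6 : F * w jb ≤ F * Wb := mul_le_mul_of_nonneg_left (hWle jb hjb) hF0
    have h7 : 0 ≤ F * w i := mul_nonneg hF0 (hw i)
    have : s * U i ≤ F * Wb := by
      rw [h5] at h4; linarith
    linarith [this, mul_comm F Wb ▸ this]
  intro i
  have hp := happ 1 (Or.inl rfl) i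
  have hm := happ (-1) (Or.inr rfl) i
  rw [one_mul] at hp
  rw [neg_one_mul] at hm
  exact abs_le.2 ⟨by linarith, hp⟩
end
end
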